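/- arXiv:1512.04689 — 10 statements merged into one kernel-verified Lean document; each statement's English description precedes it below -/
import Mathlib

section
/- Let E, A be q×n real matrices, B a q×m real matrix, and G a q×s real matrix. Let G^⊥ be a matrix of maximal rank with G^⊥·G = 0 (i.e., the rows of G^⊥ span the left annihilator of G). Then a subspace V ⊆ ℝⁿ satisfies A·V ⊆ E·V + Im G and Im B ⊆ E·V + Im G if and only if it satisfies (G^⊥A)·V ⊆ (G^⊥E)·V and Im(G^⊥B) ⊆ (G^⊥E)·V. In particular the consistent subspaces of the system E·ẋ = A·x + B·u + G·d and of the disturbance-free system G^⊥E·ẋ = G^⊥A·x + G^⊥B·u coincide. -/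
lemma key_mem (q n s r : ℕ)
    (E : Matrix (Fin q) (Fin n) ℝ)
    (G : Matrix (Fin q) (Fin s) ℝ) (Gperp : Matrix (Fin r) (Fin q) ℝ)
    (hker : LinearMap.ker Gperp.mulVecLin = LinearMap.range G.mulVecLin)
    (V : Submodule ℝ (Fin n → ℝ)) (x : Fin q → ℝ) :
    x ∈ Submodule.map E.mulVecLin V ⊔ LinearMap.range G.mulVecLin ↔
      Gperp.mulVec x ∈ Submodule.map (Gperp * E).mulVecLin V := by
  constructor
  · intro hx
    rcases Submodule.mem_sup.mp hx with ⟨y, hy, z, hz, rfl⟩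
    rcases hy with ⟨v, hv, rfl⟩
    rw [← hker] at hz
    refine ⟨v, hv, ?_⟩
    have hz0 : Gperp.mulVec z = 0 := hz
    simp [Matrix.mulVecLin_apply, Matrix.mulVec_add, hz0, ← Matrix.mulVec_mulVec]
  · rintro ⟨v, hv, hvx⟩
    have : Gperp.mulVec (x - E.mulVec v) = 0 := by
      simp only [Matrix.mulVecLin_apply] at hvx
      rw [Matrix.mulVec_sub, Matrix.mulVec_mulVec] at *
      rw [hvx]; simp
    have hmem : x - E.mulVec v ∈ LinearMap.range G.mulVecLin := by
      rw [← hker]; exact this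
    have : x = E.mulVec v + (x - E.mulVec v) := by ring_nf
    rw [this]
    exact Submodule.add_mem_sup ⟨v, hv, rfl⟩ hmem

/-- elimination of disturbances via a maximal-rank left annihilator `G^⊥`
of `G` (i.e. `ker G^⊥ = Im G`): a subspace satisfies the consistency conditions of
`E ẋ = A x + B u + G d` iff it satisfies those of `G^⊥E ẋ = G^⊥A x + G^⊥B u`. -/
theorem stmt_1 (q n m s r : ℕ)
    (E A : Matrix (Fin q) (Fin n) ℝ) (B : Matrix (Fin q) (Fin m) ℝ)
    (G : Matrix (Fin q) (Fin s) ℝ) (Gperp : Matrix (Fin r) (Fin q) ℝ)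
    (hker : LinearMap.ker Gperp.mulVecLin = LinearMap.range G.mulVecLin)
    (V : Submodule ℝ (Fin n → ℝ)) :
    (Submodule.map A.mulVecLin V ≤ Submodule.map E.mulVecLin V ⊔ LinearMap.range G.mulVecLin ∧
     LinearMap.range B.mulVecLin ≤ Submodule.map E.mulVecLin V ⊔ LinearMap.range G.mulVecLin) ↔
    (Submodule.map (Gperp * A).mulVecLin V ≤ Submodule.map (Gperp * E).mulVecLin V ∧
     LinearMap.range (Gperp * B).mulVecLin ≤ Submodule.map (Gperp * E).mulVecLin V) := by
  constructor
  · rintro ⟨h1, h2⟩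
    constructor
    · rintro _ ⟨v, hv, rfl⟩
      have := (key_mem q n s r E G Gperp hker V (A.mulVec v)).mp (h1 ⟨v, hv, rfl⟩)
      simpa [Matrix.mulVecLin_apply, Matrix.mulVec_mulVec] using this
    · rintro _ ⟨u, rfl⟩
      have := (key_mem q n s r E G Gperp hker V (B.mulVec u)).mp (h2 ⟨u, rfl⟩)
      simpa [Matrix.mulVecLin_apply, Matrix.mulVec_mulVec] using this
  · rintro ⟨h1, h2⟩
    constructor
    · rintro _ ⟨v, hv, rfl⟩
      refine (key_mem q n s r E G Gperp hker V (A.mulVecLin v)).mpr ?_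
      have := h1 ⟨v, hv, rfl⟩
      simpa [Matrix.mulVecLin_apply, Matrix.mulVec_mulVec] using this
    · rintro _ ⟨u, rfl⟩
      refine (key_mem q n s r E G Gperp hker V (B.mulVecLin u)).mpr ?_
      have := h2 ⟨u, rfl⟩
      simpa [Matrix.mulVecLin_apply, Matrix.mulVec_mulVec] using this
end

section
/- Let E, A be real q×n matrices. The matrix pencil sE − A is regular (i.e., det(sE − A) is not the identically zero polynomial, assuming q = n) if and only if V₀* ∩ ker E = {0}, where V₀* is the maximal subspace V of ℝⁿ satisfying A·V ⊆ E·V. -/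
open Polynomial Matrix

set_option maxHeartbeats 1000000 in
/-- the pencil `sE - A` is regular (its determinant is not the zero
polynomial) iff `V₀* ∩ ker E = {0}`, where `V₀*` is the maximal subspace `V`
with `A·V ⊆ E·V`. -/
theorem stmt_2 (n : ℕ) (E A : Matrix (Fin n) (Fin n) ℝ)
    (V0 : Submodule ℝ (Fin n → ℝ))
    (hV0 : Submodule.map A.mulVecLin V0 ≤ Submodule.map E.mulVecLin V0)
    (hmax : ∀ V : Submodule ℝ (Fin n → ℝ),
      Submodule.map A.mulVecLin V ≤ Submodule.map E.mulVecLin V → V ≤ V0) :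
    ((Polynomial.X : Polynomial ℝ) • E.map Polynomial.C - A.map Polynomial.C).det ≠ 0 ↔
      V0 ⊓ LinearMap.ker E.mulVecLin = ⊥ := by
  set L : Matrix (Fin n) (Fin n) ℝ[X] := (X : ℝ[X]) • E.map C - A.map C with hLdef
  constructor
  · -- regular ⇒ trivial intersection
    intro hdet
    by_contra hne
    obtain ⟨x, hxmem, hx0⟩ := Submodule.exists_mem_ne_zero_of_ne_bot hne
    obtain ⟨hxV0, hxE⟩ := Submodule.mem_inf.mp hxmem
    rw [LinearMap.mem_ker, Matrix.mulVecLin_apply] at hxE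
    -- pass to the fraction field K = ℝ(X)
    set K := FractionRing ℝ[X]
    set f : ℝ[X] →+* K := algebraMap ℝ[X] K with hfdef
    have hf : Function.Injective f := IsFractionRing.injective ℝ[X] K
    set g : ℝ →+* K := f.comp (Polynomial.C : ℝ →+* ℝ[X]) with hgdef
    have hg : Function.Injective g := hf.comp (Polynomial.C_injective)
    set ι : (Fin n → ℝ) → (Fin n → K) := fun v => g ∘ v with hιdef
    have hι : Function.Injective ι := fun a b hab =>
      funext fun i => hg (congrFun hab i)
    set EK : Matrix (Fin n) (Fin n) K := E.map g with hEK
    set AK : Matrix (Fin n) (Fin n) K := A.map g with hAK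
    set LK : Matrix (Fin n) (Fin n) K := L.map f with hLK
    have hmv : ∀ (M : Matrix (Fin n) (Fin n) ℝ) (v : Fin n → ℝ),
        (M.map g) *ᵥ (ι v) = ι (M *ᵥ v) := by
      intro M v
      funext i
      exact (RingHom.map_mulVec g M v i).symm
    have hLKmv : ∀ v : Fin n → K, LK *ᵥ v = f X • (EK *ᵥ v) - AK *ᵥ v := by
      intro v
      have : LK = f X • EK - AK := by
        funext i j
        simp only [hLK, hLdef, hEK, hAK, hgdef, Matrix.map_apply, Matrix.smul_apply,
          Matrix.sub_apply, map_sub, _root_.map_mul, smul_eq_mul, RingHom.coe_comp,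
          Function.comp_apply]
      rw [this, Matrix.sub_mulVec, Matrix.smul_mulVec]
    -- the subspace W = span_K (ι '' V0)
    set W : Submodule K (Fin n → K) := Submodule.span K (ι '' (V0 : Set (Fin n → ℝ))) with hW
    have hxW : ι x ∈ W := Submodule.subset_span ⟨x, hxV0, rfl⟩
    have hxne : ι x ≠ 0 := by
      intro h
      apply hx0
      apply hι
      rw [h]
      funext i
      simp [hιdef, map_zero]
    have hEKx : EK *ᵥ (ι x) = 0 := by
      rw [hEK, hmv, hxE]
      funext i
      simp [hιdef, map_zero]
    -- L maps W into EK · W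
    set T : Submodule K (Fin n → K) := Submodule.map EK.mulVecLin W with hT
    have hLW : Submodule.map LK.mulVecLin W ≤ T := by
      rw [hW, Submodule.map_span, Submodule.span_le]
      rintro _ ⟨_, ⟨v, hv, rfl⟩, rfl⟩
      rw [Matrix.mulVecLin_apply, hLKmv]
      apply Submodule.sub_mem
      · apply Submodule.smul_mem
        exact ⟨ι v, Submodule.subset_span ⟨v, hv, rfl⟩, rfl⟩
      · -- AK *ᵥ ι v = ι (A *ᵥ v) ∈ T
        have hAv : A.mulVecLin v ∈ Submodule.map E.mulVecLin V0 :=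
          hV0 ⟨v, hv, rfl⟩
        obtain ⟨u, hu, hEu⟩ := hAv
        rw [hAK, hmv]
        refine ⟨ι u, Submodule.subset_span ⟨u, hu, rfl⟩, ?_⟩
        rw [Matrix.mulVecLin_apply, hEK, hmv]
        rw [← Matrix.mulVecLin_apply, ← Matrix.mulVecLin_apply, hEu]
    -- rank argument
    set φ : W →ₗ[K] (Fin n → K) := EK.mulVecLin.domRestrict W with hφ
    set ψ : W →ₗ[K] (Fin n → K) := LK.mulVecLin.domRestrict W with hψ
    have hrφ : LinearMap.range φ = T := LinearMap.range_domRestrict W EK.mulVecLin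
    have hrψ : LinearMap.range ψ = Submodule.map LK.mulVecLin W :=
      LinearMap.range_domRestrict W LK.mulVecLin
    have hkerφ : (⟨ι x, hxW⟩ : W) ∈ LinearMap.ker φ := by
      rw [LinearMap.mem_ker]
      have : φ ⟨ι x, hxW⟩ = EK.mulVecLin (ι x) := rfl
      rw [this, Matrix.mulVecLin_apply, hEKx]
    have hkerφpos : 0 < Module.finrank K (LinearMap.ker φ) := by
      refine (Module.finrank_pos_iff (R := K) (M := LinearMap.ker φ)).mpr ?_
      refine nontrivial_of_ne (⟨⟨ι x, hxW⟩, hkerφ⟩ : LinearMap.ker φ) 0 ?_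
      intro h
      apply hxne
      have h1 : (⟨ι x, hxW⟩ : W) = 0 := Subtype.ext_iff.mp h
      exact Subtype.ext_iff.mp h1
    have hrkφ := LinearMap.finrank_range_add_finrank_ker φ
    have hrkψ := LinearMap.finrank_range_add_finrank_ker ψ
    have hle : Module.finrank K (LinearMap.range ψ) ≤ Module.finrank K (LinearMap.range φ) := by
      apply Submodule.finrank_mono
      rw [hrφ, hrψ]
      exact hLW
    have hkerψ : LinearMap.ker ψ ≠ ⊥ := by
      intro h
      rw [h, finrank_bot] at hrkψ
      omega
    obtain ⟨e, he, he0⟩ := Submodule.exists_mem_ne_zero_of_ne_bot hkerψ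
    have heK : LK *ᵥ (e : Fin n → K) = 0 := by
      rw [LinearMap.mem_ker] at he
      have : ψ e = LK.mulVecLin (e : Fin n → K) := rfl
      rw [he] at this
      rw [← Matrix.mulVecLin_apply, ← this]
    have heKne : (e : Fin n → K) ≠ 0 := fun h => he0 (Subtype.ext h)
    have hdetK : LK.det = 0 := Matrix.exists_mulVec_eq_zero_iff.mp ⟨e, heKne, heK⟩
    apply hdet
    apply hf
    have hfd : f L.det = LK.det := by rw [RingHom.map_det]; rfl
    rw [hfd, hdetK, map_zero]
  · -- trivial intersection ⇒ regular
    intro hbot hdet0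
    obtain ⟨w, hw0, hww⟩ := Matrix.exists_mulVec_eq_zero_iff.mpr hdet0
    set z : ℕ → Fin n → ℝ := fun k j => (w j).coeff k with hzdef
    have hexp : ∀ i, (X : ℝ[X]) * ((E.map C) *ᵥ w) i - ((A.map C) *ᵥ w) i = 0 := by
      intro i
      have h1 := congrFun hww i
      simpa [hLdef, Matrix.sub_mulVec, Matrix.smul_mulVec, Pi.sub_apply,
        Pi.smul_apply, smul_eq_mul] using h1
    have hcoeff : ∀ (M : Matrix (Fin n) (Fin n) ℝ) (i : Fin n) (k : ℕ),
        (((M.map C) *ᵥ w) i).coeff k = (M *ᵥ (z k)) i := by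
      intro M i k
      simp [Matrix.mulVec, dotProduct, Polynomial.finset_sum_coeff,
        Matrix.map_apply, Polynomial.coeff_C_mul, hzdef]
    have hrel : ∀ k : ℕ, E *ᵥ (z k) = A *ᵥ (z (k + 1)) := by
      intro k
      funext i
      have h2 := congrArg (fun p => p.coeff (k + 1)) (hexp i)
      simp only [Polynomial.coeff_sub, Polynomial.coeff_X_mul, Polynomial.coeff_zero,
        hcoeff] at h2
      linarith [h2]
    have hA0 : A *ᵥ (z 0) = 0 := by
      funext i
      have h2 := congrArg (fun p => p.coeff 0) (hexp i)
      simp only [Polynomial.coeff_sub, Polynomial.coeff_zero, Polynomial.mul_coeff_zero,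
        Polynomial.coeff_X_zero, zero_mul, zero_sub, neg_eq_zero, hcoeff] at h2
      simpa using h2
    set V : Submodule ℝ (Fin n → ℝ) := Submodule.span ℝ (Set.range z) with hVdef
    have hAV : Submodule.map A.mulVecLin V ≤ Submodule.map E.mulVecLin V := by
      rw [hVdef, Submodule.map_span, Submodule.span_le]
      rintro _ ⟨_, ⟨k, rfl⟩, rfl⟩
      cases k with
      | zero =>
        rw [Matrix.mulVecLin_apply, hA0]
        exact Submodule.zero_mem _
      | succ m =>
        refine ⟨z m, Submodule.subset_span ⟨m, rfl⟩, ?_⟩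
        rw [Matrix.mulVecLin_apply, Matrix.mulVecLin_apply, hrel m]
    have hVV0 : V ≤ V0 := hmax V hAV
    obtain ⟨j0, hj0⟩ : ∃ j, w j ≠ 0 := by
      by_contra h
      push_neg at h
      exact hw0 (funext h)
    set N := Finset.univ.sup fun j => (w j).natDegree with hN
    have hdle : ∀ j, (w j).natDegree ≤ N := fun j =>
      Finset.le_sup (f := fun j => (w j).natDegree) (Finset.mem_univ j)
    have hzN1 : z (N + 1) = 0 := by
      funext j
      exact Polynomial.coeff_eq_zero_of_natDegree_lt
        (lt_of_le_of_lt (hdle j) (Nat.lt_succ_self N))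
    have hzN : z N ≠ 0 := by
      obtain ⟨j1, -, hj1⟩ := Finset.exists_mem_eq_sup Finset.univ
        ⟨j0, Finset.mem_univ j0⟩ (fun j => (w j).natDegree)
      by_cases h : w j1 = 0
      · have hN0 : N = 0 := by rw [hN, hj1, h, Polynomial.natDegree_zero]
        intro hc
        apply hj0
        have hd : (w j0).natDegree ≤ 0 := hN0 ▸ hdle j0
        have := Polynomial.eq_C_of_natDegree_le_zero hd
        rw [this]
        have hc0 : (w j0).coeff N = 0 := congrFun hc j0
        rw [hN0] at hc0
        rw [hc0, map_zero]
      · intro hc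
        apply h
        rw [← Polynomial.leadingCoeff_eq_zero, Polynomial.leadingCoeff, ← hj1, ← hN]
        exact congrFun hc j1
    have hmem : z N ∈ V0 ⊓ LinearMap.ker E.mulVecLin := by
      rw [Submodule.mem_inf]
      constructor
      · exact hVV0 (Submodule.subset_span ⟨N, rfl⟩)
      · rw [LinearMap.mem_ker, Matrix.mulVecLin_apply, hrel N, hzN1, Matrix.mulVec_zero]
    rw [hbot, Submodule.mem_bot] at hmem
    exact hzN hmem
end

section
/- Let E, A ∈ ℝ^{n×n} and suppose V₀* ∩ ker E ≠ {0}, where V₀* is the maximal subspace with A·V₀* ⊆ E·V₀*. Then (assuming q = n) the polynomial det(sE − A) is identically zero. -/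
/-- if `V₀* ∩ ker E ≠ {0}`, where `V₀*` is the maximal subspace with
`A·V₀* ⊆ E·V₀*`, then `det(sE - A)` is the zero polynomial. -/
theorem stmt_3 (n : ℕ) (E A : Matrix (Fin n) (Fin n) ℝ)
    (V0 : Submodule ℝ (Fin n → ℝ))
    (hV0 : Submodule.map A.mulVecLin V0 ≤ Submodule.map E.mulVecLin V0)
    (hmax : ∀ V : Submodule ℝ (Fin n → ℝ),
      Submodule.map A.mulVecLin V ≤ Submodule.map E.mulVecLin V → V ≤ V0)
    (hne : V0 ⊓ LinearMap.ker E.mulVecLin ≠ ⊥) :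
    ((Polynomial.X : Polynomial ℝ) • E.map Polynomial.C - A.map Polynomial.C).det = 0 := by
  classical
  -- Step 1: for every real s, the real matrix s•E - A is singular.
  have key : ∀ s : ℝ, (s • E - A).det = 0 := by
    intro s
    set W : Submodule ℝ (Fin n → ℝ) := Submodule.map E.mulVecLin V0 with hW
    -- finrank W < finrank V0
    have hlt : Module.finrank ℝ W < Module.finrank ℝ V0 := by
      have h1 := LinearMap.finrank_range_add_finrank_ker (E.mulVecLin.domRestrict V0)
      have hrange : LinearMap.range (E.mulVecLin.domRestrict V0) = W := by
        simp [hW]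
      have hkerne : LinearMap.ker (E.mulVecLin.domRestrict V0) ≠ ⊥ := by
        rw [LinearMap.ker_domRestrict]
        obtain ⟨x, hx, hx0⟩ := Submodule.exists_mem_ne_zero_of_ne_bot hne
        intro hbot
        have hxV : x ∈ V0 := hx.1
        have : (⟨x, hxV⟩ : V0) ∈ (LinearMap.ker E.mulVecLin).comap V0.subtype := by
          simpa using hx.2
        rw [hbot] at this
        exact hx0 (by simpa using congrArg Subtype.val this)
      have hpos : 0 < Module.finrank ℝ (LinearMap.ker (E.mulVecLin.domRestrict V0)) := by
        apply (Module.finrank_pos_iff (R := ℝ) (M := LinearMap.ker (E.mulVecLin.domRestrict V0))).mpr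
        exact Submodule.nontrivial_iff_ne_bot.mpr hkerne
      rw [hrange] at h1
      omega
    -- (s•E - A) maps V0 into W
    have hmap : ∀ x ∈ V0, (s • E - A).mulVec x ∈ W := by
      intro x hx
      have h1 : E.mulVec x ∈ W := ⟨x, hx, rfl⟩
      have h2 : A.mulVec x ∈ W := hV0 ⟨x, hx, rfl⟩
      have : (s • E - A).mulVec x = s • E.mulVec x - A.mulVec x := by
        simp [Matrix.sub_mulVec, Matrix.smul_mulVec]
      rw [this]
      exact W.sub_mem (W.smul_mem s h1) h2
    -- restricted map V0 → W is not injective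
    let g : V0 →ₗ[ℝ] W :=
      LinearMap.codRestrict W ((s • E - A).mulVecLin.domRestrict V0)
        (fun x => hmap x x.2)
    have hginj : ¬ Function.Injective g := fun hinj =>
      absurd (LinearMap.finrank_le_finrank_of_injective hinj) (not_le.mpr hlt)
    rw [← LinearMap.ker_eq_bot] at hginj
    obtain ⟨x, hxker, hx0⟩ := Submodule.exists_mem_ne_zero_of_ne_bot hginj
    rw [← Matrix.exists_mulVec_eq_zero_iff]
    refine ⟨(x : Fin n → ℝ), ?_, ?_⟩
    · intro h
      exact hx0 (Subtype.ext h)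
    · have := congrArg Subtype.val (LinearMap.mem_ker.mp hxker)
      simpa [g, Matrix.sub_mulVec, Matrix.smul_mulVec] using this
  -- Step 2: transfer to the polynomial determinant.
  refine Polynomial.funext fun s => ?_
  have heval : ((Polynomial.X : Polynomial ℝ) • E.map Polynomial.C
      - A.map Polynomial.C).det.eval s = (s • E - A).det := by
    have := RingHom.map_det (Polynomial.evalRingHom s)
      ((Polynomial.X : Polynomial ℝ) • E.map Polynomial.C - A.map Polynomial.C)
    have hM : (Polynomial.evalRingHom s).mapMatrix
        ((Polynomial.X : Polynomial ℝ) • E.map Polynomial.C - A.map Polynomial.C)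
        = s • E - A := by
      ext i j
      simp [Matrix.map_apply, Matrix.sub_apply, Matrix.smul_apply, smul_eq_mul]; ring
    rw [hM] at this
    simpa using this
  rw [heval, key s, Polynomial.eval_zero]
end

section
/- Let R ⊆ X₁ × X₂ be a subspace satisfying the algebraic bisimulation conditions: (a) R + (E₁⁻¹(Im G₁) ∩ V₁*) × {0} = R + {0} × (E₂⁻¹(Im G₂) ∩ V₂*), (b) [A₁ 0; 0 A₂]·R ⊆ [E₁ 0; 0 E₂]·R + Im[G₁ 0; 0 G₂], and (c) Im[B₁; B₂] ⊆ [E₁ 0; 0 E₂]·R + Im[G₁ 0; 0 G₂]. Then for every (x₁, x₂) ∈ R, every u ∈ U, and every f₁ ∈ V₁*, d₁ ∈ D₁ with E₁f₁ = A₁x₁ + B₁u + G₁d₁, there exist f₂ ∈ V₂* and d₂ ∈ D₂ with E₂f₂ = A₂x₂ + B₂u + G₂d₂ and (f₁, f₂) ∈ R. -/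
/-- the algebraic bisimulation conditions (30a)-(30c) imply the
one-step simulation property of Proposition 3.2 (direction 1 → 2). -/
theorem stmt_6 (q1 q2 n1 n2 m s1 s2 : ℕ)
    (E1 A1 : Matrix (Fin q1) (Fin n1) ℝ) (B1 : Matrix (Fin q1) (Fin m) ℝ)
    (G1 : Matrix (Fin q1) (Fin s1) ℝ)
    (E2 A2 : Matrix (Fin q2) (Fin n2) ℝ) (B2 : Matrix (Fin q2) (Fin m) ℝ)
    (G2 : Matrix (Fin q2) (Fin s2) ℝ)
    -- the consistent subspaces V₁*, V₂*
    (V1 : Submodule ℝ (Fin n1 → ℝ)) (V2 : Submodule ℝ (Fin n2 → ℝ))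
    (hV1a : Submodule.map A1.mulVecLin V1 ≤
      Submodule.map E1.mulVecLin V1 ⊔ LinearMap.range G1.mulVecLin)
    (hV1b : LinearMap.range B1.mulVecLin ≤
      Submodule.map E1.mulVecLin V1 ⊔ LinearMap.range G1.mulVecLin)
    (hV1max : ∀ V : Submodule ℝ (Fin n1 → ℝ),
      Submodule.map A1.mulVecLin V ≤ Submodule.map E1.mulVecLin V ⊔ LinearMap.range G1.mulVecLin →
      LinearMap.range B1.mulVecLin ≤ Submodule.map E1.mulVecLin V ⊔ LinearMap.range G1.mulVecLin →
      V ≤ V1)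
    (hV2a : Submodule.map A2.mulVecLin V2 ≤
      Submodule.map E2.mulVecLin V2 ⊔ LinearMap.range G2.mulVecLin)
    (hV2b : LinearMap.range B2.mulVecLin ≤
      Submodule.map E2.mulVecLin V2 ⊔ LinearMap.range G2.mulVecLin)
    (hV2max : ∀ V : Submodule ℝ (Fin n2 → ℝ),
      Submodule.map A2.mulVecLin V ≤ Submodule.map E2.mulVecLin V ⊔ LinearMap.range G2.mulVecLin →
      LinearMap.range B2.mulVecLin ≤ Submodule.map E2.mulVecLin V ⊔ LinearMap.range G2.mulVecLin →
      V ≤ V2)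
    (R : Submodule ℝ ((Fin n1 → ℝ) × (Fin n2 → ℝ)))
    -- (30a)
    (ha : R ⊔ Submodule.prod
        (Submodule.comap E1.mulVecLin (LinearMap.range G1.mulVecLin) ⊓ V1) ⊥ =
      R ⊔ Submodule.prod ⊥
        (Submodule.comap E2.mulVecLin (LinearMap.range G2.mulVecLin) ⊓ V2))
    -- (30b)
    (hb : Submodule.map (LinearMap.prodMap A1.mulVecLin A2.mulVecLin) R ≤
      Submodule.map (LinearMap.prodMap E1.mulVecLin E2.mulVecLin) R ⊔
        LinearMap.range (LinearMap.prodMap G1.mulVecLin G2.mulVecLin))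
    -- (30c)
    (hc : LinearMap.range (LinearMap.prod B1.mulVecLin B2.mulVecLin) ≤
      Submodule.map (LinearMap.prodMap E1.mulVecLin E2.mulVecLin) R ⊔
        LinearMap.range (LinearMap.prodMap G1.mulVecLin G2.mulVecLin)) :
    ∀ x1 x2, (x1, x2) ∈ R → ∀ u : Fin m → ℝ, ∀ f1 ∈ V1, ∀ d1 : Fin s1 → ℝ,
      E1.mulVec f1 = A1.mulVec x1 + B1.mulVec u + G1.mulVec d1 →
      ∃ f2 ∈ V2, ∃ d2 : Fin s2 → ℝ,
        E2.mulVec f2 = A2.mulVec x2 + B2.mulVec u + G2.mulVec d2 ∧ (f1, f2) ∈ R := by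

  -- helper: decompose membership in E·R + Im G
  have decomp : ∀ (a : Fin q1 → ℝ) (b : Fin q2 → ℝ),
      (a, b) ∈ Submodule.map (LinearMap.prodMap E1.mulVecLin E2.mulVecLin) R ⊔
        LinearMap.range (LinearMap.prodMap G1.mulVecLin G2.mulVecLin) →
      ∃ w1 w2 e1 e2, (w1, w2) ∈ R ∧ a = E1.mulVec w1 + G1.mulVec e1 ∧
        b = E2.mulVec w2 + G2.mulVec e2 := by
    intro a b hab
    rw [Submodule.mem_sup] at hab
    obtain ⟨y, hy, z, hz, hyz⟩ := hab
    obtain ⟨⟨w1, w2⟩, hw, rfl⟩ := hy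
    obtain ⟨⟨e1, e2⟩, rfl⟩ := hz
    refine ⟨w1, w2, e1, e2, hw, ?_, ?_⟩
    · have h := congrArg Prod.fst hyz
      simpa [Matrix.mulVecLin_apply] using h.symm
    · have h := congrArg Prod.snd hyz
      simpa [Matrix.mulVecLin_apply] using h.symm
  have hR1 : Submodule.map (LinearMap.fst ℝ (Fin n1 → ℝ) (Fin n2 → ℝ)) R ≤ V1 := by
    apply hV1max
    · rintro _ ⟨_, ⟨⟨x1, x2⟩, hx, rfl⟩, rfl⟩
      obtain ⟨w1, w2, e1, e2, hw, h1, h2⟩ :=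
        decomp _ _ (hb ⟨(x1, x2), hx, rfl⟩)
      rw [Submodule.mem_sup]
      exact ⟨E1.mulVec w1, ⟨w1, ⟨(w1, w2), hw, rfl⟩, rfl⟩, G1.mulVec e1, ⟨e1, rfl⟩,
        by simpa [Matrix.mulVecLin_apply] using h1.symm⟩
    · rintro _ ⟨u, rfl⟩
      obtain ⟨w1, w2, e1, e2, hw, h1, h2⟩ :=
        decomp _ _ (hc ⟨u, rfl⟩)
      rw [Submodule.mem_sup]
      exact ⟨E1.mulVec w1, ⟨w1, ⟨(w1, w2), hw, rfl⟩, rfl⟩, G1.mulVec e1, ⟨e1, rfl⟩,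
        by simpa [Matrix.mulVecLin_apply] using h1.symm⟩
  have hR2 : Submodule.map (LinearMap.snd ℝ (Fin n1 → ℝ) (Fin n2 → ℝ)) R ≤ V2 := by
    apply hV2max
    · rintro _ ⟨_, ⟨⟨x1, x2⟩, hx, rfl⟩, rfl⟩
      obtain ⟨w1, w2, e1, e2, hw, h1, h2⟩ :=
        decomp _ _ (hb ⟨(x1, x2), hx, rfl⟩)
      rw [Submodule.mem_sup]
      exact ⟨E2.mulVec w2, ⟨w2, ⟨(w1, w2), hw, rfl⟩, rfl⟩, G2.mulVec e2, ⟨e2, rfl⟩,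
        by simpa [Matrix.mulVecLin_apply] using h2.symm⟩
    · rintro _ ⟨u, rfl⟩
      obtain ⟨w1, w2, e1, e2, hw, h1, h2⟩ :=
        decomp _ _ (hc ⟨u, rfl⟩)
      rw [Submodule.mem_sup]
      exact ⟨E2.mulVec w2, ⟨w2, ⟨(w1, w2), hw, rfl⟩, rfl⟩, G2.mulVec e2, ⟨e2, rfl⟩,
        by simpa [Matrix.mulVecLin_apply] using h2.symm⟩
  intro x1 x2 hx u f1 hf1 d1 hE
  obtain ⟨w1, w2, e1, e2, hw, hA1, hA2⟩ := decomp _ _ (hb ⟨(x1, x2), hx, rfl⟩)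
  obtain ⟨v1, v2, g1, g2, hv, hB1, hB2⟩ := decomp _ _ (hc ⟨u, rfl⟩)
  simp only [LinearMap.comp_apply, LinearMap.fst_apply, LinearMap.snd_apply,
    Matrix.mulVecLin_apply] at hA1 hA2 hB1 hB2
  set p1 := w1 + v1 with hp1
  set p2 := w2 + v2 with hp2
  have hp : (p1, p2) ∈ R := by
    have := R.add_mem hw hv
    simpa [Prod.mk_add_mk] using this
  have hp1V : p1 ∈ V1 :=
    V1.add_mem (hR1 ⟨(w1, w2), hw, rfl⟩) (hR1 ⟨(v1, v2), hv, rfl⟩)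
  have hp2V : p2 ∈ V2 :=
    V2.add_mem (hR2 ⟨(w1, w2), hw, rfl⟩) (hR2 ⟨(v1, v2), hv, rfl⟩)
  have hdiff : f1 - p1 ∈
      Submodule.comap E1.mulVecLin (LinearMap.range G1.mulVecLin) ⊓ V1 := by
    refine ⟨⟨e1 + g1 + d1, ?_⟩, V1.sub_mem hf1 hp1V⟩
    simp only [Matrix.mulVecLin_apply, Matrix.mulVec_sub, Matrix.mulVec_add, hp1]
    rw [hE, hA1, hB1]
    ring
  have hmem : (f1, p2) ∈ R ⊔ Submodule.prod ⊥
      (Submodule.comap E2.mulVecLin (LinearMap.range G2.mulVecLin) ⊓ V2) := by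
    rw [← ha]
    have h1 : ((p1, p2) : (Fin n1 → ℝ) × (Fin n2 → ℝ)) ∈ R ⊔ Submodule.prod
        (Submodule.comap E1.mulVecLin (LinearMap.range G1.mulVecLin) ⊓ V1) ⊥ :=
      Submodule.mem_sup_left hp
    have h2 : ((f1 - p1, 0) : (Fin n1 → ℝ) × (Fin n2 → ℝ)) ∈ R ⊔ Submodule.prod
        (Submodule.comap E1.mulVecLin (LinearMap.range G1.mulVecLin) ⊓ V1) ⊥ :=
      Submodule.mem_sup_right ⟨hdiff, Submodule.zero_mem ⊥⟩
    have := Submodule.add_mem _ h1 h2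
    simpa [Prod.mk_add_mk] using this
  rw [Submodule.mem_sup] at hmem
  obtain ⟨r, hr, s, hs, hrs⟩ := hmem
  obtain ⟨hs1, hs2⟩ := hs
  have hs1' : s.1 = 0 := hs1
  obtain ⟨⟨c, hc2⟩, hzV2⟩ := hs2
  have hr1 : r.1 = f1 := by
    have h := congrArg Prod.fst hrs
    simpa [hs1'] using h
  have hr2 : r.2 = p2 - s.2 := by
    have h := congrArg Prod.snd hrs
    simp only [Prod.fst_add, Prod.snd_add] at h
    linear_combination (norm := abel) h
  refine ⟨r.2, ?_, -(e2 + g2 + c), ?_, ?_⟩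
  · rw [hr2]; exact V2.sub_mem hp2V hzV2
  · have hE2z : E2.mulVec s.2 = G2.mulVec c := hc2.symm
    rw [hr2]
    simp only [Matrix.mulVec_sub, Matrix.mulVec_add, Matrix.mulVec_neg, hp2, hE2z]
    rw [hA2, hB2]
    ring
  · have : r = (f1, r.2) := by rw [← hr1]
    rw [← this]; exact hr
end

section
/- Let R ⊆ X₁ × X₂ be a subspace such that for every (x₁,x₂) ∈ R, u ∈ U and f₁ ∈ V₁*, d₁ with E₁f₁ = A₁x₁ + B₁u + G₁d₁ there exist f₂ ∈ V₂*, d₂ with E₂f₂ = A₂x₂ + B₂u + G₂d₂ and (f₁,f₂) ∈ R, and symmetrically with indices 1 and 2 interchanged. Then R + (E₁⁻¹(Im G₁) ∩ V₁*) × {0} = R + {0} × (E₂⁻¹(Im G₂) ∩ V₂*). -/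
/-- the one-step bisimulation property (Proposition 3.2, both
directions) implies condition (30a). -/
theorem stmt_7 (q1 q2 n1 n2 m s1 s2 : ℕ)
    (E1 A1 : Matrix (Fin q1) (Fin n1) ℝ) (B1 : Matrix (Fin q1) (Fin m) ℝ)
    (G1 : Matrix (Fin q1) (Fin s1) ℝ)
    (E2 A2 : Matrix (Fin q2) (Fin n2) ℝ) (B2 : Matrix (Fin q2) (Fin m) ℝ)
    (G2 : Matrix (Fin q2) (Fin s2) ℝ)
    -- the consistent subspaces V₁*, V₂*
    (V1 : Submodule ℝ (Fin n1 → ℝ)) (V2 : Submodule ℝ (Fin n2 → ℝ))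
    (hV1a : Submodule.map A1.mulVecLin V1 ≤
      Submodule.map E1.mulVecLin V1 ⊔ LinearMap.range G1.mulVecLin)
    (hV1b : LinearMap.range B1.mulVecLin ≤
      Submodule.map E1.mulVecLin V1 ⊔ LinearMap.range G1.mulVecLin)
    (hV1max : ∀ V : Submodule ℝ (Fin n1 → ℝ),
      Submodule.map A1.mulVecLin V ≤ Submodule.map E1.mulVecLin V ⊔ LinearMap.range G1.mulVecLin →
      LinearMap.range B1.mulVecLin ≤ Submodule.map E1.mulVecLin V ⊔ LinearMap.range G1.mulVecLin →
      V ≤ V1)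
    (hV2a : Submodule.map A2.mulVecLin V2 ≤
      Submodule.map E2.mulVecLin V2 ⊔ LinearMap.range G2.mulVecLin)
    (hV2b : LinearMap.range B2.mulVecLin ≤
      Submodule.map E2.mulVecLin V2 ⊔ LinearMap.range G2.mulVecLin)
    (hV2max : ∀ V : Submodule ℝ (Fin n2 → ℝ),
      Submodule.map A2.mulVecLin V ≤ Submodule.map E2.mulVecLin V ⊔ LinearMap.range G2.mulVecLin →
      LinearMap.range B2.mulVecLin ≤ Submodule.map E2.mulVecLin V ⊔ LinearMap.range G2.mulVecLin →
      V ≤ V2)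
    (R : Submodule ℝ ((Fin n1 → ℝ) × (Fin n2 → ℝ)))
    (hfwd : ∀ x1 x2, (x1, x2) ∈ R → ∀ u : Fin m → ℝ, ∀ f1 ∈ V1, ∀ d1 : Fin s1 → ℝ,
      E1.mulVec f1 = A1.mulVec x1 + B1.mulVec u + G1.mulVec d1 →
      ∃ f2 ∈ V2, ∃ d2 : Fin s2 → ℝ,
        E2.mulVec f2 = A2.mulVec x2 + B2.mulVec u + G2.mulVec d2 ∧ (f1, f2) ∈ R)
    (hbwd : ∀ x1 x2, (x1, x2) ∈ R → ∀ u : Fin m → ℝ, ∀ f2 ∈ V2, ∀ d2 : Fin s2 → ℝ,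
      E2.mulVec f2 = A2.mulVec x2 + B2.mulVec u + G2.mulVec d2 →
      ∃ f1 ∈ V1, ∃ d1 : Fin s1 → ℝ,
        E1.mulVec f1 = A1.mulVec x1 + B1.mulVec u + G1.mulVec d1 ∧ (f1, f2) ∈ R) :
    R ⊔ Submodule.prod
        (Submodule.comap E1.mulVecLin (LinearMap.range G1.mulVecLin) ⊓ V1) ⊥ =
      R ⊔ Submodule.prod ⊥
        (Submodule.comap E2.mulVecLin (LinearMap.range G2.mulVecLin) ⊓ V2) := by
  apply le_antisymm
  · refine sup_le le_sup_left ?_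
    rintro ⟨f1, z⟩ ⟨⟨⟨d1, hd1⟩, hf1V⟩, hz⟩
    have hz0 : z = 0 := hz
    obtain ⟨f2, hf2V, d2, hE2, hR⟩ := hfwd 0 0 R.zero_mem 0 f1 hf1V d1
      (by simpa [Matrix.mulVecLin_apply] using hd1.symm)
    have key : ((f1, z) : (Fin n1 → ℝ) × (Fin n2 → ℝ)) = (f1, f2) - (0, f2) := by
      simp [Prod.ext_iff, hz0]
    rw [key]
    exact sub_mem (Submodule.mem_sup_left hR)
      (Submodule.mem_sup_right ⟨Submodule.mem_bot _ |>.mpr rfl,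
        ⟨⟨d2, by simp [Matrix.mulVecLin_apply, hE2, Matrix.mulVec_zero]⟩, hf2V⟩⟩)
  · refine sup_le le_sup_left ?_
    rintro ⟨z, f2⟩ ⟨hz, ⟨⟨d2, hd2⟩, hf2V⟩⟩
    have hz0 : z = 0 := hz
    obtain ⟨f1, hf1V, d1, hE1, hR⟩ := hbwd 0 0 R.zero_mem 0 f2 hf2V d2
      (by simpa [Matrix.mulVecLin_apply] using hd2.symm)
    have key : ((z, f2) : (Fin n1 → ℝ) × (Fin n2 → ℝ)) = (f1, f2) - (f1, 0) := by
      simp [Prod.ext_iff, hz0]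
    rw [key]
    exact sub_mem (Submodule.mem_sup_left hR)
      (Submodule.mem_sup_right ⟨⟨⟨d1, by simp [Matrix.mulVecLin_apply, hE1, Matrix.mulVec_zero]⟩, hf1V⟩,
        Submodule.mem_bot _ |>.mpr rfl⟩)
end

section
/- Let Σ₁, Σ₂ be systems ẋᵢ = Aᵢxᵢ + Bᵢu + Gᵢdᵢ, yᵢ = Cᵢxᵢ, and let Gᵢ^⊥ be left annihilators of Gᵢ of maximal rank (ker Gᵢ^⊥ = Im Gᵢ). If a subspace R ⊆ X₁ × X₂ satisfies the bisimulation conditions (a) R + Im G₁ × {0} = R + {0} × Im G₂, (b) [A₁ 0; 0 A₂]·R ⊆ R + Im[G₁ 0; 0 G₂], (c) Im[B₁;B₂] ⊆ R + Im[G₁ 0; 0 G₂], (d) R ⊆ ker[C₁, −C₂], then R also satisfies: (a') R + (ker G₁^⊥) × {0} = R + {0} × (ker G₂^⊥), (b') [G₁^⊥A₁ 0; 0 G₂^⊥A₂]·R ⊆ [G₁^⊥ 0; 0 G₂^⊥]·R, (c') Im[G₁^⊥B₁; G₂^⊥B₂] ⊆ [G₁^⊥ 0; 0 G₂^⊥]·R,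 (d') R ⊆ ker[C₁, −C₂]; and conversely. -/
private lemma range_prodMap' {R : Type*} [CommRing R] {M M₂ M₃ M₄ : Type*}
    [AddCommGroup M] [AddCommGroup M₂] [AddCommGroup M₃] [AddCommGroup M₄]
    [Module R M] [Module R M₂] [Module R M₃] [Module R M₄]
    (f : M →ₗ[R] M₂) (g : M₃ →ₗ[R] M₄) :
    LinearMap.range (f.prodMap g) = Submodule.prod (LinearMap.range f) (LinearMap.range g) := by
  ext ⟨x, y⟩
  simp only [LinearMap.mem_range, Submodule.mem_prod]
  constructor
  · rintro ⟨⟨a, b⟩, h⟩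
    exact ⟨⟨a, congrArg Prod.fst h⟩, ⟨b, congrArg Prod.snd h⟩⟩
  · rintro ⟨⟨a, ha⟩, ⟨b, hb⟩⟩
    exact ⟨(a, b), Prod.ext ha hb⟩

private lemma map_le_iff_aux {R : Type*} [CommRing R] {M N : Type*}
    [AddCommGroup M] [AddCommGroup N] [Module R M] [Module R N]
    (P : M →ₗ[R] N) (T S : Submodule R M) :
    T ≤ S ⊔ LinearMap.ker P ↔ Submodule.map P T ≤ Submodule.map P S := by
  constructor
  · rintro h _ ⟨x, hx, rfl⟩
    obtain ⟨s, hs, k, hk, rfl⟩ := Submodule.mem_sup.mp (h hx)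
    refine ⟨s, hs, ?_⟩
    simp [LinearMap.mem_ker.mp hk]
  · intro h x hx
    obtain ⟨s, hs, hPs⟩ := h ⟨x, hx, rfl⟩
    refine Submodule.mem_sup.mpr ⟨s, hs, x - s, ?_, by abel⟩
    simp [LinearMap.mem_ker, hPs]

/-- `R` is a bisimulation relation between the ODE systems with
disturbances (conditions (37)) iff it is one between the disturbance-eliminated
DAE systems `Gᵢ^⊥ẋᵢ = Gᵢ^⊥Aᵢxᵢ + Gᵢ^⊥Bᵢu` (conditions (49)). -/
theorem stmt_9 (n1 n2 m s1 s2 p r1 r2 : ℕ)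
    (A1 : Matrix (Fin n1) (Fin n1) ℝ) (B1 : Matrix (Fin n1) (Fin m) ℝ)
    (G1 : Matrix (Fin n1) (Fin s1) ℝ) (C1 : Matrix (Fin p) (Fin n1) ℝ)
    (A2 : Matrix (Fin n2) (Fin n2) ℝ) (B2 : Matrix (Fin n2) (Fin m) ℝ)
    (G2 : Matrix (Fin n2) (Fin s2) ℝ) (C2 : Matrix (Fin p) (Fin n2) ℝ)
    (G1perp : Matrix (Fin r1) (Fin n1) ℝ) (G2perp : Matrix (Fin r2) (Fin n2) ℝ)
    (hG1 : LinearMap.ker G1perp.mulVecLin = LinearMap.range G1.mulVecLin)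
    (hG2 : LinearMap.ker G2perp.mulVecLin = LinearMap.range G2.mulVecLin)
    (R : Submodule ℝ ((Fin n1 → ℝ) × (Fin n2 → ℝ))) :
    -- conditions (37) for the ODE systems with disturbances
    ((R ⊔ Submodule.prod (LinearMap.range G1.mulVecLin) ⊥ =
        R ⊔ Submodule.prod ⊥ (LinearMap.range G2.mulVecLin)) ∧
     (Submodule.map (LinearMap.prodMap A1.mulVecLin A2.mulVecLin) R ≤
        R ⊔ LinearMap.range (LinearMap.prodMap G1.mulVecLin G2.mulVecLin)) ∧
     (LinearMap.range (LinearMap.prod B1.mulVecLin B2.mulVecLin) ≤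
        R ⊔ LinearMap.range (LinearMap.prodMap G1.mulVecLin G2.mulVecLin)) ∧
     (R ≤ LinearMap.ker (LinearMap.coprod C1.mulVecLin (-C2.mulVecLin)))) ↔
    -- conditions (49) for the disturbance-eliminated DAE systems
    ((R ⊔ Submodule.prod (LinearMap.ker G1perp.mulVecLin) ⊥ =
        R ⊔ Submodule.prod ⊥ (LinearMap.ker G2perp.mulVecLin)) ∧
     (Submodule.map (LinearMap.prodMap (G1perp * A1).mulVecLin (G2perp * A2).mulVecLin) R ≤
        Submodule.map (LinearMap.prodMap G1perp.mulVecLin G2perp.mulVecLin) R) ∧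
     (LinearMap.range (LinearMap.prod (G1perp * B1).mulVecLin (G2perp * B2).mulVecLin) ≤
        Submodule.map (LinearMap.prodMap G1perp.mulVecLin G2perp.mulVecLin) R) ∧
     (R ≤ LinearMap.ker (LinearMap.coprod C1.mulVecLin (-C2.mulVecLin)))) := by
  have hker : LinearMap.ker (LinearMap.prodMap G1perp.mulVecLin G2perp.mulVecLin)
      = LinearMap.range (LinearMap.prodMap G1.mulVecLin G2.mulVecLin) := by
    rw [LinearMap.ker_prodMap, range_prodMap', hG1, hG2]
  set P := LinearMap.prodMap G1perp.mulVecLin G2perp.mulVecLin with hP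
  have hcompA : (LinearMap.prodMap (G1perp * A1).mulVecLin (G2perp * A2).mulVecLin)
      = P.comp (LinearMap.prodMap A1.mulVecLin A2.mulVecLin) := by
    rw [Matrix.mulVecLin_mul, Matrix.mulVecLin_mul]
    rfl
  have hcompB : (LinearMap.prod (G1perp * B1).mulVecLin (G2perp * B2).mulVecLin)
      = P.comp (LinearMap.prod B1.mulVecLin B2.mulVecLin) := by
    rw [Matrix.mulVecLin_mul, Matrix.mulVecLin_mul]
    rfl
  rw [hG1, hG2, hcompA, hcompB, LinearMap.range_comp,
    Submodule.map_comp, ← hker,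
    map_le_iff_aux, map_le_iff_aux]
end

section
/- Let E₁, A₁ ∈ ℝ^{n₁×n₁} and E₂, A₂ ∈ ℝ^{n₂×n₂} with E₁, E₂ invertible, and let B₁, B₂, C₁, C₂ be real matrices of compatible sizes. Suppose C₁(sE₁ − A₁)⁻¹B₁ = C₂(sE₂ − A₂)⁻¹B₂ as rational matrix functions. Then the subspace R := span of the columns of the block matrices [ (E₁⁻¹A₁)^k E₁⁻¹B₁ ; (E₂⁻¹A₂)^k E₂⁻¹B₂ ] for k = 0, 1, 2, … satisfies: (a) [A₁ 0; 0 A₂]·R ⊆ [E₁ 0; 0 E₂]·R, (b) Im[B₁; B₂] ⊆ [E₁ 0; 0 E₂]·R, (c) R ⊆ ker[C₁, −C₂]. -/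
set_option synthInstance.maxHeartbeats 1000000
set_option maxHeartbeats 1000000

open Polynomial Matrix

namespace Stmt10Aux

noncomputable section

/-- entrywise map of a real matrix into rational functions -/
def mk {a b : ℕ} (M : Matrix (Fin a) (Fin b) ℝ) : Matrix (Fin a) (Fin b) (RatFunc ℝ) :=
  M.map (algebraMap ℝ (RatFunc ℝ))

lemma mk_mul {a b c : ℕ} (M : Matrix (Fin a) (Fin b) ℝ) (N : Matrix (Fin b) (Fin c) ℝ) :
    mk (M * N) = mk M * mk N := Matrix.map_mul

lemma mk_one {a : ℕ} : mk (1 : Matrix (Fin a) (Fin a) ℝ) = 1 :=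
  Matrix.map_one _ (map_zero _) (map_one _)

/-- strictly proper rational functions -/
def SP (f : RatFunc ℝ) : Prop :=
  ∃ q d : Polynomial ℝ, d ≠ 0 ∧ q.natDegree < d.natDegree ∧
    f * algebraMap (Polynomial ℝ) (RatFunc ℝ) d = algebraMap _ _ q

lemma SP_zero : SP 0 := ⟨0, Polynomial.X, X_ne_zero, by simp, by simp⟩

lemma SP_sub {f g} (hf : SP f) (hg : SP g) : SP (f - g) := by
  obtain ⟨q1, d1, hd1, hq1, he1⟩ := hf
  obtain ⟨q2, d2, hd2, hq2, he2⟩ := hg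
  refine ⟨q1 * d2 - q2 * d1, d1 * d2, mul_ne_zero hd1 hd2, ?_, ?_⟩
  · have h1 : (q1 * d2).natDegree < (d1 * d2).natDegree := by
      rw [Polynomial.natDegree_mul hd1 hd2]
      calc (q1 * d2).natDegree ≤ q1.natDegree + d2.natDegree := natDegree_mul_le
        _ < _ := by omega
    have h2 : (q2 * d1).natDegree < (d1 * d2).natDegree := by
      rw [Polynomial.natDegree_mul hd1 hd2]
      calc (q2 * d1).natDegree ≤ q2.natDegree + d1.natDegree := natDegree_mul_le
        _ < _ := by omega
    calc (q1 * d2 - q2 * d1).natDegree ≤ max (q1 * d2).natDegree (q2 * d1).natDegree :=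
          natDegree_sub_le _ _
      _ < _ := max_lt h1 h2
  · rw [_root_.map_mul, map_sub, _root_.map_mul, _root_.map_mul, ← he1, ← he2]; ring

lemma SP_const {c : ℝ} (h : SP (algebraMap ℝ (RatFunc ℝ) c)) : c = 0 := by
  obtain ⟨q, d, hd, hq, he⟩ := h
  by_contra hc
  have hmap : algebraMap ℝ (RatFunc ℝ) c
      = algebraMap (Polynomial ℝ) (RatFunc ℝ) (Polynomial.C c) := by
    rw [IsScalarTower.algebraMap_apply ℝ (Polynomial ℝ) (RatFunc ℝ)]
    simp [Polynomial.algebraMap_eq]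
  rw [hmap, ← _root_.map_mul] at he
  have := RatFunc.algebraMap_injective (K := ℝ) he
  have hdeg : (Polynomial.C c * d).natDegree = d.natDegree := natDegree_C_mul hc
  rw [this] at hdeg
  omega

lemma natDegree_adjugate_le {n : ℕ} (Q : Matrix (Fin n) (Fin n) (Polynomial ℝ))
    (h : ∀ i j, (Q i j).natDegree ≤ 1) (i j : Fin n) :
    (Q.adjugate i j).natDegree ≤ n - 1 := by
  rw [Matrix.adjugate_apply, Matrix.det_apply]
  refine natDegree_sum_le_of_forall_le _ _ fun σ _ => ?_
  set M := Q.updateRow j (Pi.single i 1) with hM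
  have hsmul : (Equiv.Perm.sign σ • ∏ b, M (σ b) b).natDegree
      = (∏ b, M (σ b) b).natDegree := by
    rcases Int.units_eq_one_or (Equiv.Perm.sign σ) with h1 | h1 <;> simp [h1]
  rw [hsmul]
  refine le_trans (natDegree_prod_le _ _) ?_
  set b0 := σ.symm j with hb0
  have hσb0 : σ b0 = j := σ.apply_symm_apply j
  rw [← Finset.add_sum_erase _ _ (Finset.mem_univ b0)]
  have h0 : (M (σ b0) b0).natDegree = 0 := by
    rw [hσb0, hM, Matrix.updateRow_self]
    rcases eq_or_ne b0 i with h | h <;> simp [Pi.single_apply, h, eq_comm]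
  have hrest : ∑ b ∈ Finset.univ.erase b0, (M (σ b) b).natDegree ≤ (n - 1) * 1 := by
    refine le_trans (Finset.sum_le_card_nsmul _ _ 1 ?_) ?_
    · intro b hb
      have hbne : σ b ≠ j := by
        intro hbj
        exact (Finset.mem_erase.mp hb).1 (by rw [hb0, ← hbj, Equiv.symm_apply_apply])
      rw [hM, Matrix.updateRow_ne hbne]
      exact h _ _
    · simp [Finset.card_erase_of_mem]
  omega

section System

variable {n : ℕ} (E A : Matrix (Fin n) (Fin n) ℝ)

def Pm : Matrix (Fin n) (Fin n) (RatFunc ℝ) := (RatFunc.X : RatFunc ℝ) • mk E - mk A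

def Qm : Matrix (Fin n) (Fin n) (Polynomial ℝ) :=
  (Polynomial.X : Polynomial ℝ) • E.map Polynomial.C - A.map Polynomial.C

lemma Qm_entry_natDegree (i j : Fin n) : ((Qm E A) i j).natDegree ≤ 1 := by
  have h : (Qm E A) i j = Polynomial.X * Polynomial.C (E i j) - Polynomial.C (A i j) := by
    simp [Qm, Matrix.sub_apply, Matrix.smul_apply, Matrix.map_apply, smul_eq_mul]
  rw [h]
  refine le_trans (natDegree_sub_le _ _) (max_le ?_ ?_)
  · exact le_trans natDegree_mul_le (by simp)
  · simp

lemma Qm_map : (Qm E A).map (algebraMap (Polynomial ℝ) (RatFunc ℝ)) = Pm E A := by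
  ext i j
  simp only [Qm, Pm, mk, Matrix.map_apply, Matrix.sub_apply, Matrix.smul_apply, smul_eq_mul,
    map_sub, _root_.map_mul, RatFunc.algebraMap_X, RatFunc.algebraMap_C,
    RatFunc.algebraMap_eq_C]

lemma Qm_factor (hE : IsUnit E.det) : Qm E A = E.map Polynomial.C * charmatrix (E⁻¹ * A) := by
  rw [charmatrix, Matrix.mul_sub]
  have hscalar : (Matrix.scalar (Fin n)) (Polynomial.X : Polynomial ℝ)
      = (Polynomial.X : Polynomial ℝ) • (1 : Matrix (Fin n) (Fin n) (Polynomial ℝ)) := by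
    ext i j
    simp [Matrix.scalar_apply, Matrix.smul_apply, Matrix.one_apply, Matrix.diagonal_apply,
      mul_ite, smul_eq_mul]
  rw [hscalar, Matrix.mul_smul, mul_one, RingHom.mapMatrix_apply, ← Matrix.map_mul,
    Matrix.mul_nonsing_inv_cancel_left _ _ hE, Qm]

lemma Edet_ne (hE : IsUnit E.det) : E.det ≠ 0 := by
  intro h; rw [h] at hE; exact not_isUnit_zero hE

lemma Qm_det_eq (hE : IsUnit E.det) : (Qm E A).det = Polynomial.C E.det * (E⁻¹ * A).charpoly := by
  rw [Qm_factor E A hE, Matrix.det_mul, ← RingHom.mapMatrix_apply, ← RingHom.map_det]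
  rfl

lemma Qm_det_ne (hE : IsUnit E.det) : (Qm E A).det ≠ 0 := by
  rw [Qm_det_eq E A hE]
  exact mul_ne_zero (by simpa using Edet_ne E hE) (Matrix.charpoly_monic _).ne_zero

lemma Qm_det_natDegree (hE : IsUnit E.det) : (Qm E A).det.natDegree = n := by
  rw [Qm_det_eq E A hE, natDegree_C_mul (Edet_ne E hE), Matrix.charpoly_natDegree_eq_dim]
  simp

lemma Pm_det : (Pm E A).det = algebraMap (Polynomial ℝ) (RatFunc ℝ) (Qm E A).det := by
  rw [← Qm_map, ← RingHom.mapMatrix_apply, ← RingHom.map_det]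

lemma Pm_det_isUnit (hE : IsUnit E.det) : IsUnit (Pm E A).det := by
  rw [Pm_det, isUnit_iff_ne_zero]
  simpa using fun h => Qm_det_ne E A hE (RatFunc.algebraMap_injective (K := ℝ) (by simpa using h))

lemma algQdet_ne (hE : IsUnit E.det) : algebraMap (Polynomial ℝ) (RatFunc ℝ) (Qm E A).det ≠ 0 := by
  intro h
  exact Qm_det_ne E A hE (RatFunc.algebraMap_injective (K := ℝ) (by simpa using h))

lemma Pm_inv (hE : IsUnit E.det) : (Pm E A)⁻¹ = (algebraMap (Polynomial ℝ) (RatFunc ℝ) (Qm E A).det)⁻¹ •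
    ((Qm E A).adjugate.map (algebraMap (Polynomial ℝ) (RatFunc ℝ))) := by
  apply Matrix.inv_eq_right_inv
  rw [Matrix.mul_smul, ← Qm_map, ← Matrix.map_mul, Matrix.mul_adjugate]
  have h : (((Qm E A).det • (1 : Matrix (Fin n) (Fin n) (Polynomial ℝ))).map
        (algebraMap (Polynomial ℝ) (RatFunc ℝ)))
      = algebraMap (Polynomial ℝ) (RatFunc ℝ) (Qm E A).det • (1 : Matrix (Fin n) (Fin n) (RatFunc ℝ)) := by
    ext i j
    simp [Matrix.map_apply, Matrix.smul_apply, Matrix.one_apply, mul_ite, smul_eq_mul,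
      apply_ite (algebraMap (Polynomial ℝ) (RatFunc ℝ))]
  rw [h, smul_smul, inv_mul_cancel₀ (algQdet_ne E A hE), one_smul]

lemma mk_eq_map_map {a b : ℕ} (M : Matrix (Fin a) (Fin b) ℝ) :
    mk M = (M.map Polynomial.C).map (algebraMap (Polynomial ℝ) (RatFunc ℝ)) := by
  ext i j
  simp [mk, Matrix.map_apply, RatFunc.algebraMap_C, RatFunc.algebraMap_eq_C]

lemma SP_entry (hE : IsUnit E.det) {p m : ℕ} (Cm : Matrix (Fin p) (Fin n) ℝ) (N : Matrix (Fin n) (Fin m) ℝ)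
    (a : Fin p) (b : Fin m) : SP ((mk Cm * (Pm E A)⁻¹ * mk N) a b) := by
  rcases Nat.eq_zero_or_pos n with hn | hn
  · subst hn
    have h0 : (mk Cm * (Pm E A)⁻¹ * mk N) a b = 0 := by
      simp [Matrix.mul_apply]
    rw [h0]; exact SP_zero
  · set q := (Cm.map Polynomial.C * (Qm E A).adjugate * N.map Polynomial.C) a b with hq
    refine ⟨q, (Qm E A).det, Qm_det_ne E A hE, ?_, ?_⟩
    · rw [Qm_det_natDegree E A hE]
      have hqd : q.natDegree ≤ n - 1 := by
        rw [hq, Matrix.mul_apply]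
        refine natDegree_sum_le_of_forall_le _ _ fun j _ => ?_
        refine le_trans natDegree_mul_le ?_
        have h1 : ((Cm.map Polynomial.C * (Qm E A).adjugate) a j).natDegree ≤ n - 1 := by
          rw [Matrix.mul_apply]
          refine natDegree_sum_le_of_forall_le _ _ fun i _ => ?_
          refine le_trans natDegree_mul_le ?_
          have := natDegree_adjugate_le (Qm E A) (Qm_entry_natDegree E A) i j
          simp [Matrix.map_apply]
          omega
        simp [Matrix.map_apply]
        omega
      omega
    · have hrw : mk Cm * (Pm E A)⁻¹ * mk N
          = (algebraMap (Polynomial ℝ) (RatFunc ℝ) (Qm E A).det)⁻¹ •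
            ((Cm.map Polynomial.C * (Qm E A).adjugate * N.map Polynomial.C).map
              (algebraMap (Polynomial ℝ) (RatFunc ℝ))) := by
        rw [Pm_inv E A hE, Matrix.mul_smul, Matrix.smul_mul, Matrix.map_mul, Matrix.map_mul,
          mk_eq_map_map, mk_eq_map_map]
      rw [hrw, Matrix.smul_apply, Matrix.map_apply, ← hq, smul_eq_mul]
      rw [mul_comm ((algebraMap (Polynomial ℝ) (RatFunc ℝ) (Qm E A).det))⁻¹, mul_assoc,
        inv_mul_cancel₀ (algQdet_ne E A hE), mul_one]

lemma Pm_inv_rec (hE : IsUnit E.det) :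
    (Pm E A)⁻¹ = (RatFunc.X : RatFunc ℝ)⁻¹ • mk E⁻¹
      + (RatFunc.X : RatFunc ℝ)⁻¹ • ((Pm E A)⁻¹ * mk (A * E⁻¹)) := by
  apply Matrix.inv_eq_right_inv
  rw [Matrix.mul_add, Matrix.mul_smul, Matrix.mul_smul, ← Matrix.mul_assoc,
    Matrix.mul_nonsing_inv _ (Pm_det_isUnit E A hE), one_mul]
  have h1 : Pm E A * mk E⁻¹ = (RatFunc.X : RatFunc ℝ) • 1 - mk (A * E⁻¹) := by
    rw [Pm, Matrix.sub_mul, Matrix.smul_mul, ← mk_mul, ← mk_mul, Matrix.mul_nonsing_inv E hE,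
      mk_one]
  rw [h1, smul_sub, sub_add_cancel, smul_smul, inv_mul_cancel₀ RatFunc.X_ne_zero, one_smul]

lemma step (hE : IsUnit E.det) {p m : ℕ} (Cm : Matrix (Fin p) (Fin n) ℝ) (B : Matrix (Fin n) (Fin m) ℝ) (k : ℕ) :
    mk Cm * (Pm E A)⁻¹ * mk ((A * E⁻¹) ^ k * B)
      = (RatFunc.X : RatFunc ℝ)⁻¹ • mk (Cm * E⁻¹ * ((A * E⁻¹) ^ k * B))
        + (RatFunc.X : RatFunc ℝ)⁻¹ • (mk Cm * (Pm E A)⁻¹ * mk ((A * E⁻¹) ^ (k + 1) * B)) := by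
  conv_lhs => rw [Pm_inv_rec E A hE]
  rw [Matrix.mul_add, Matrix.add_mul, Matrix.mul_smul, Matrix.smul_mul, Matrix.mul_smul,
    Matrix.smul_mul]
  congr 1
  · rw [← mk_mul, ← mk_mul, Matrix.mul_assoc]
  · congr 1
    rw [Matrix.mul_assoc (mk Cm), Matrix.mul_assoc ((Pm E A)⁻¹), ← mk_mul,
      ← Matrix.mul_assoc (mk Cm)]
    congr 2
    rw [← Matrix.mul_assoc, ← pow_succ']

lemma shuffle {p m : ℕ} (Cm : Matrix (Fin p) (Fin n) ℝ) (B : Matrix (Fin n) (Fin m) ℝ) (k : ℕ) :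
    Cm * E⁻¹ * ((A * E⁻¹) ^ k * B) = Cm * ((E⁻¹ * A) ^ k * (E⁻¹ * B)) := by
  have hsc : SemiconjBy E⁻¹ (A * E⁻¹) (E⁻¹ * A) := (Matrix.mul_assoc _ _ _).symm
  have h := hsc.pow_right k
  rw [Matrix.mul_assoc Cm, ← Matrix.mul_assoc E⁻¹, h, Matrix.mul_assoc ((E⁻¹ * A) ^ k)]

lemma cancelE {m : ℕ} (hE : IsUnit E.det) (B : Matrix (Fin n) (Fin m) ℝ) (k : ℕ) :
    E * ((E⁻¹ * A) ^ (k + 1) * (E⁻¹ * B)) = A * ((E⁻¹ * A) ^ k * (E⁻¹ * B)) := by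
  rw [pow_succ', Matrix.mul_assoc (E⁻¹ * A), Matrix.mul_assoc E⁻¹,
    Matrix.mul_nonsing_inv_cancel_left _ _ hE]

end System

section Main

variable {n1 n2 m p : ℕ}
  (E1 A1 : Matrix (Fin n1) (Fin n1) ℝ) (B1 : Matrix (Fin n1) (Fin m) ℝ)
  (C1 : Matrix (Fin p) (Fin n1) ℝ)
  (E2 A2 : Matrix (Fin n2) (Fin n2) ℝ) (B2 : Matrix (Fin n2) (Fin m) ℝ)
  (C2 : Matrix (Fin p) (Fin n2) ℝ)

lemma markov (hE1 : IsUnit E1.det) (hE2 : IsUnit E2.det)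
    (h : mk C1 * (Pm E1 A1)⁻¹ * mk B1 = mk C2 * (Pm E2 A2)⁻¹ * mk B2) :
    ∀ k : ℕ, C1 * E1⁻¹ * ((A1 * E1⁻¹) ^ k * B1) = C2 * E2⁻¹ * ((A2 * E2⁻¹) ^ k * B2) := by
  have main : ∀ k : ℕ,
      mk C1 * (Pm E1 A1)⁻¹ * mk ((A1 * E1⁻¹) ^ k * B1)
        = mk C2 * (Pm E2 A2)⁻¹ * mk ((A2 * E2⁻¹) ^ k * B2) →
      (C1 * E1⁻¹ * ((A1 * E1⁻¹) ^ k * B1) = C2 * E2⁻¹ * ((A2 * E2⁻¹) ^ k * B2) ∧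
        mk C1 * (Pm E1 A1)⁻¹ * mk ((A1 * E1⁻¹) ^ (k + 1) * B1)
          = mk C2 * (Pm E2 A2)⁻¹ * mk ((A2 * E2⁻¹) ^ (k + 1) * B2)) := by
    intro k hk
    rw [step E1 A1 hE1 C1 B1 k, step E2 A2 hE2 C2 B2 k] at hk
    have hk' : mk (C1 * E1⁻¹ * ((A1 * E1⁻¹) ^ k * B1)) +
        mk C1 * (Pm E1 A1)⁻¹ * mk ((A1 * E1⁻¹) ^ (k + 1) * B1)
        = mk (C2 * E2⁻¹ * ((A2 * E2⁻¹) ^ k * B2)) +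
          mk C2 * (Pm E2 A2)⁻¹ * mk ((A2 * E2⁻¹) ^ (k + 1) * B2) := by
      have h2 := congrArg (fun M => (RatFunc.X : RatFunc ℝ) • M) hk
      simpa [smul_add, smul_smul, mul_inv_cancel₀ (RatFunc.X_ne_zero (K := ℝ)), one_smul] using h2
    have hD : C1 * E1⁻¹ * ((A1 * E1⁻¹) ^ k * B1) = C2 * E2⁻¹ * ((A2 * E2⁻¹) ^ k * B2) := by
      ext a b
      have hab := Matrix.ext_iff.mpr hk' a b
      simp only [Matrix.add_apply] at hab
      have hdiff : algebraMap ℝ (RatFunc ℝ)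
          ((C1 * E1⁻¹ * ((A1 * E1⁻¹) ^ k * B1)) a b
            - (C2 * E2⁻¹ * ((A2 * E2⁻¹) ^ k * B2)) a b)
          = (mk C2 * (Pm E2 A2)⁻¹ * mk ((A2 * E2⁻¹) ^ (k + 1) * B2)) a b
            - (mk C1 * (Pm E1 A1)⁻¹ * mk ((A1 * E1⁻¹) ^ (k + 1) * B1)) a b := by
        rw [map_sub]
        have e1 : (mk (C1 * E1⁻¹ * ((A1 * E1⁻¹) ^ k * B1))) a b
            = algebraMap ℝ (RatFunc ℝ) ((C1 * E1⁻¹ * ((A1 * E1⁻¹) ^ k * B1)) a b) := rfl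
        have e2 : (mk (C2 * E2⁻¹ * ((A2 * E2⁻¹) ^ k * B2))) a b
            = algebraMap ℝ (RatFunc ℝ) ((C2 * E2⁻¹ * ((A2 * E2⁻¹) ^ k * B2)) a b) := rfl
        rw [e1, e2] at hab
        linear_combination hab
      have h0 := SP_const (by
        rw [hdiff]
        exact SP_sub (SP_entry E2 A2 hE2 C2 _ a b) (SP_entry E1 A1 hE1 C1 _ a b))
      exact sub_eq_zero.mp h0
    refine ⟨hD, ?_⟩
    rw [hD] at hk'
    exact add_left_cancel hk'
  have hT : ∀ k : ℕ,
      mk C1 * (Pm E1 A1)⁻¹ * mk ((A1 * E1⁻¹) ^ k * B1)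
        = mk C2 * (Pm E2 A2)⁻¹ * mk ((A2 * E2⁻¹) ^ k * B2) := by
    intro k
    induction k with
    | zero => simpa using h
    | succ k ih => exact (main k ih).2
  exact fun k => (main k (hT k)).1

end Main

end

end Stmt10Aux

open Stmt10Aux in
/-- if `E₁, E₂` are invertible and the transfer matrices
`Cᵢ(sEᵢ - Aᵢ)⁻¹Bᵢ` (as matrices of rational functions) are equal, then the
subspace spanned by the columns of `[(Eᵢ⁻¹Aᵢ)^k Eᵢ⁻¹Bᵢ]ᵢ`, `k ≥ 0`, satisfies
the bisimulation conditions (51a)-(51c). -/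
theorem stmt_10 (n1 n2 m p : ℕ)
    (E1 A1 : Matrix (Fin n1) (Fin n1) ℝ) (B1 : Matrix (Fin n1) (Fin m) ℝ)
    (C1 : Matrix (Fin p) (Fin n1) ℝ)
    (E2 A2 : Matrix (Fin n2) (Fin n2) ℝ) (B2 : Matrix (Fin n2) (Fin m) ℝ)
    (C2 : Matrix (Fin p) (Fin n2) ℝ)
    (hE1 : IsUnit E1.det) (hE2 : IsUnit E2.det)
    (htransfer :
      C1.map (algebraMap ℝ (RatFunc ℝ)) *
        ((RatFunc.X : RatFunc ℝ) • E1.map (algebraMap ℝ (RatFunc ℝ)) - A1.map (algebraMap ℝ (RatFunc ℝ)))⁻¹ *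
        B1.map (algebraMap ℝ (RatFunc ℝ)) =
      C2.map (algebraMap ℝ (RatFunc ℝ)) *
        ((RatFunc.X : RatFunc ℝ) • E2.map (algebraMap ℝ (RatFunc ℝ)) - A2.map (algebraMap ℝ (RatFunc ℝ)))⁻¹ *
        B2.map (algebraMap ℝ (RatFunc ℝ)))
    (R : Submodule ℝ ((Fin n1 → ℝ) × (Fin n2 → ℝ)))
    (hR : R = ⨆ k : ℕ, LinearMap.range (LinearMap.prod
      ((E1⁻¹ * A1) ^ k * (E1⁻¹ * B1)).mulVecLin
      ((E2⁻¹ * A2) ^ k * (E2⁻¹ * B2)).mulVecLin)) :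
    (Submodule.map (LinearMap.prodMap A1.mulVecLin A2.mulVecLin) R ≤
       Submodule.map (LinearMap.prodMap E1.mulVecLin E2.mulVecLin) R) ∧
    (LinearMap.range (LinearMap.prod B1.mulVecLin B2.mulVecLin) ≤
       Submodule.map (LinearMap.prodMap E1.mulVecLin E2.mulVecLin) R) ∧
    (R ≤ LinearMap.ker (LinearMap.coprod C1.mulVecLin (-C2.mulVecLin))) := by
  have ht : mk C1 * (Pm E1 A1)⁻¹ * mk B1 = mk C2 * (Pm E2 A2)⁻¹ * mk B2 := htransfer
  have hMk : ∀ k : ℕ, C1 * ((E1⁻¹ * A1) ^ k * (E1⁻¹ * B1))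
      = C2 * ((E2⁻¹ * A2) ^ k * (E2⁻¹ * B2)) := by
    intro k
    have h := markov E1 A1 B1 C1 E2 A2 B2 C2 hE1 hE2 ht k
    rwa [shuffle, shuffle] at h
  subst hR
  have key : ∀ (F1 : Matrix (Fin n1) (Fin n1) ℝ) (F2 : Matrix (Fin n2) (Fin n2) ℝ)
      (M1 : Matrix (Fin n1) (Fin m) ℝ) (M2 : Matrix (Fin n2) (Fin m) ℝ),
      Submodule.map (LinearMap.prodMap F1.mulVecLin F2.mulVecLin)
        (LinearMap.range (LinearMap.prod M1.mulVecLin M2.mulVecLin))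
      = LinearMap.range (LinearMap.prod (F1 * M1).mulVecLin (F2 * M2).mulVecLin) := by
    intro F1 F2 M1 M2
    rw [← LinearMap.range_comp]
    congr 1
    apply LinearMap.ext
    intro x
    simp [Matrix.mulVecLin_apply, LinearMap.prodMap_apply, Matrix.mulVec_mulVec]
  refine ⟨?_, ?_, ?_⟩
  · rw [Submodule.map_iSup, Submodule.map_iSup]
    refine iSup_le fun k => le_trans ?_ (le_iSup _ (k + 1))
    rw [key, key, cancelE E1 A1 hE1 B1 k, cancelE E2 A2 hE2 B2 k]
  · rw [Submodule.map_iSup]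
    refine le_trans (le_of_eq ?_) (le_iSup _ 0)
    rw [key]
    have h1 : E1 * ((E1⁻¹ * A1) ^ 0 * (E1⁻¹ * B1)) = B1 := by
      rw [pow_zero, Matrix.one_mul, Matrix.mul_nonsing_inv_cancel_left _ _ hE1]
    have h2 : E2 * ((E2⁻¹ * A2) ^ 0 * (E2⁻¹ * B2)) = B2 := by
      rw [pow_zero, Matrix.one_mul, Matrix.mul_nonsing_inv_cancel_left _ _ hE2]
    rw [h1, h2]
  · refine iSup_le fun k => ?_
    rintro x ⟨u, rfl⟩
    simp only [LinearMap.mem_ker, LinearMap.prod_apply, Function.prod, LinearMap.coprod_apply,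
      LinearMap.neg_apply, Matrix.mulVecLin_apply, Matrix.mulVec_mulVec]
    rw [hMk k, add_neg_cancel]
end

section
/- Let S ⊆ X₁ × X₂ be a simulation relation of Σ₁ by Σ₂ (satisfying conditions (59a)–(59d)) and T ⊆ X₂ × X₁ a simulation relation of Σ₂ by Σ₁ (satisfying (59a)–(59d) with indices 1 and 2 interchanged). Then R := S + T⁻¹, where T⁻¹ := {(x₁,x₂) : (x₂,x₁) ∈ T}, satisfies the bisimulation conditions (30a)–(30d): (a) R + (E₁⁻¹(Im G₁)∩V₁*)×{0} = R + {0}×(E₂⁻¹(Im G₂)∩V₂*), (b) [A₁ 0;0 A₂]·R ⊆ [E₁ 0;0 E₂]·R + Im[G₁ 0;0 G₂], (c) Im[B₁;B₂] ⊆ [E₁ 0;0 E₂]·R + Im[G₁ 0;0 G₂], (d) R ⊆ ker[C₁,−C₂]. -/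
lemma aux_map_prodComm {R M N : Type*} [CommRing R] [AddCommGroup M] [AddCommGroup N]
    [Module R M] [Module R N] (p : Submodule R M) (q : Submodule R N) :
    Submodule.map (LinearEquiv.prodComm R M N : M × N →ₗ[R] N × M) (p.prod q) = q.prod p := by
  ext ⟨x, y⟩
  constructor
  · rintro ⟨⟨a, b⟩, ⟨ha, hb⟩, h⟩
    cases h
    exact ⟨hb, ha⟩
  · rintro ⟨hx, hy⟩
    exact ⟨(y, x), ⟨hy, hx⟩, rfl⟩

/-- if `S` is a simulation relation of `Σ₁` by `Σ₂` and `T` a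
simulation relation of `Σ₂` by `Σ₁`, then `R := S + T⁻¹` satisfies the
bisimulation conditions (30a)-(30d). -/
theorem stmt_12 (q1 q2 n1 n2 m s1 s2 p : ℕ)
    (E1 A1 : Matrix (Fin q1) (Fin n1) ℝ) (B1 : Matrix (Fin q1) (Fin m) ℝ)
    (G1 : Matrix (Fin q1) (Fin s1) ℝ) (C1 : Matrix (Fin p) (Fin n1) ℝ)
    (E2 A2 : Matrix (Fin q2) (Fin n2) ℝ) (B2 : Matrix (Fin q2) (Fin m) ℝ)
    (G2 : Matrix (Fin q2) (Fin s2) ℝ) (C2 : Matrix (Fin p) (Fin n2) ℝ)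
    (V1 : Submodule ℝ (Fin n1 → ℝ)) (V2 : Submodule ℝ (Fin n2 → ℝ))
    (S : Submodule ℝ ((Fin n1 → ℝ) × (Fin n2 → ℝ)))
    (T : Submodule ℝ ((Fin n2 → ℝ) × (Fin n1 → ℝ)))
    -- conditions (59) for S (simulation of Σ₁ by Σ₂)
    (hSa : S ⊔ Submodule.prod
        (Submodule.comap E1.mulVecLin (LinearMap.range G1.mulVecLin) ⊓ V1) ⊥ ≤
      S ⊔ Submodule.prod ⊥
        (Submodule.comap E2.mulVecLin (LinearMap.range G2.mulVecLin) ⊓ V2))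
    (hSb : Submodule.map (LinearMap.prodMap A1.mulVecLin A2.mulVecLin) S ≤
      Submodule.map (LinearMap.prodMap E1.mulVecLin E2.mulVecLin) S ⊔
        LinearMap.range (LinearMap.prodMap G1.mulVecLin G2.mulVecLin))
    (hSc : LinearMap.range (LinearMap.prod B1.mulVecLin B2.mulVecLin) ≤
      Submodule.map (LinearMap.prodMap E1.mulVecLin E2.mulVecLin) S ⊔
        LinearMap.range (LinearMap.prodMap G1.mulVecLin G2.mulVecLin))
    (hSd : S ≤ LinearMap.ker (LinearMap.coprod C1.mulVecLin (-C2.mulVecLin)))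
    -- conditions (59) for T (simulation of Σ₂ by Σ₁, indices interchanged)
    (hTa : T ⊔ Submodule.prod
        (Submodule.comap E2.mulVecLin (LinearMap.range G2.mulVecLin) ⊓ V2) ⊥ ≤
      T ⊔ Submodule.prod ⊥
        (Submodule.comap E1.mulVecLin (LinearMap.range G1.mulVecLin) ⊓ V1))
    (hTb : Submodule.map (LinearMap.prodMap A2.mulVecLin A1.mulVecLin) T ≤
      Submodule.map (LinearMap.prodMap E2.mulVecLin E1.mulVecLin) T ⊔
        LinearMap.range (LinearMap.prodMap G2.mulVecLin G1.mulVecLin))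
    (hTc : LinearMap.range (LinearMap.prod B2.mulVecLin B1.mulVecLin) ≤
      Submodule.map (LinearMap.prodMap E2.mulVecLin E1.mulVecLin) T ⊔
        LinearMap.range (LinearMap.prodMap G2.mulVecLin G1.mulVecLin))
    (hTd : T ≤ LinearMap.ker (LinearMap.coprod C2.mulVecLin (-C1.mulVecLin)))
    (R : Submodule ℝ ((Fin n1 → ℝ) × (Fin n2 → ℝ)))
    (hR : R = S ⊔ Submodule.map
      (LinearEquiv.prodComm ℝ (Fin n2 → ℝ) (Fin n1 → ℝ) : _ →ₗ[ℝ] _) T) :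
    (R ⊔ Submodule.prod
        (Submodule.comap E1.mulVecLin (LinearMap.range G1.mulVecLin) ⊓ V1) ⊥ =
      R ⊔ Submodule.prod ⊥
        (Submodule.comap E2.mulVecLin (LinearMap.range G2.mulVecLin) ⊓ V2)) ∧
    (Submodule.map (LinearMap.prodMap A1.mulVecLin A2.mulVecLin) R ≤
      Submodule.map (LinearMap.prodMap E1.mulVecLin E2.mulVecLin) R ⊔
        LinearMap.range (LinearMap.prodMap G1.mulVecLin G2.mulVecLin)) ∧
    (LinearMap.range (LinearMap.prod B1.mulVecLin B2.mulVecLin) ≤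
      Submodule.map (LinearMap.prodMap E1.mulVecLin E2.mulVecLin) R ⊔
        LinearMap.range (LinearMap.prodMap G1.mulVecLin G2.mulVecLin)) ∧
    (R ≤ LinearMap.ker (LinearMap.coprod C1.mulVecLin (-C2.mulVecLin))) := by
  subst hR
  set e := ((LinearEquiv.prodComm ℝ (Fin n2 → ℝ) (Fin n1 → ℝ)) :
    ((Fin n2 → ℝ) × (Fin n1 → ℝ)) →ₗ[ℝ] ((Fin n1 → ℝ) × (Fin n2 → ℝ))) with he
  set e' := ((LinearEquiv.prodComm ℝ (Fin q2 → ℝ) (Fin q1 → ℝ)) :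
    ((Fin q2 → ℝ) × (Fin q1 → ℝ)) →ₗ[ℝ] ((Fin q1 → ℝ) × (Fin q2 → ℝ))) with he'
  set P1 := Submodule.comap E1.mulVecLin (LinearMap.range G1.mulVecLin) ⊓ V1 with hP1
  set P2 := Submodule.comap E2.mulVecLin (LinearMap.range G2.mulVecLin) ⊓ V2 with hP2
  -- key commutation facts
  have hcompA : (LinearMap.prodMap A1.mulVecLin A2.mulVecLin).comp e =
      e'.comp (LinearMap.prodMap A2.mulVecLin A1.mulVecLin) := by
    apply LinearMap.ext; rintro ⟨x, y⟩; rfl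
  have hcompE : (LinearMap.prodMap E1.mulVecLin E2.mulVecLin).comp e =
      e'.comp (LinearMap.prodMap E2.mulVecLin E1.mulVecLin) := by
    apply LinearMap.ext; rintro ⟨x, y⟩; rfl
  have hrangeG : Submodule.map e'
      (LinearMap.range (LinearMap.prodMap G2.mulVecLin G1.mulVecLin)) =
      LinearMap.range (LinearMap.prodMap G1.mulVecLin G2.mulVecLin) := by
    ext ⟨x, y⟩
    constructor
    · rintro ⟨⟨a, b⟩, ⟨⟨u, v⟩, hv⟩, h⟩
      cases h
      cases hv
      exact ⟨(v, u), rfl⟩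
    · rintro ⟨⟨u, v⟩, hv⟩
      cases hv
      exact ⟨(G2.mulVecLin v, G1.mulVecLin u), ⟨(v, u), rfl⟩, rfl⟩
  have hmapAeT : Submodule.map (LinearMap.prodMap A1.mulVecLin A2.mulVecLin)
      (Submodule.map e T) = Submodule.map e'
      (Submodule.map (LinearMap.prodMap A2.mulVecLin A1.mulVecLin) T) := by
    rw [← Submodule.map_comp, hcompA, Submodule.map_comp]
  have hmapEeT : Submodule.map (LinearMap.prodMap E1.mulVecLin E2.mulVecLin)
      (Submodule.map e T) = Submodule.map e'
      (Submodule.map (LinearMap.prodMap E2.mulVecLin E1.mulVecLin) T) := by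
    rw [← Submodule.map_comp, hcompE, Submodule.map_comp]
  have hSleR : S ≤ S ⊔ Submodule.map e T := le_sup_left
  have hTleR : Submodule.map e T ≤ S ⊔ Submodule.map e T := le_sup_right
  refine ⟨?_, ?_, ?_, ?_⟩
  · -- (a)
    apply le_antisymm
    · apply sup_le
      · exact le_sup_left
      · calc Submodule.prod P1 ⊥ ≤ S ⊔ Submodule.prod P1 ⊥ := le_sup_right
          _ ≤ S ⊔ Submodule.prod ⊥ P2 := hSa
          _ ≤ (S ⊔ Submodule.map e T) ⊔ Submodule.prod ⊥ P2 :=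
            sup_le_sup_right hSleR _
    · apply sup_le
      · exact le_sup_left
      · have h1 : Submodule.prod (⊥ : Submodule ℝ (Fin n1 → ℝ)) P2 =
            Submodule.map e (Submodule.prod P2 ⊥) := (aux_map_prodComm _ _).symm
        have h2 : Submodule.map e (Submodule.prod P2 ⊥) ≤
            Submodule.map e (T ⊔ Submodule.prod P2 ⊥) :=
          Submodule.map_mono le_sup_right
        have h3 : Submodule.map e (T ⊔ Submodule.prod P2 ⊥) ≤
            Submodule.map e (T ⊔ Submodule.prod ⊥ P1) := Submodule.map_mono hTa
        have h4 : Submodule.map e (T ⊔ Submodule.prod ⊥ P1) =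
            Submodule.map e T ⊔ Submodule.prod P1 ⊥ := by
          rw [Submodule.map_sup, aux_map_prodComm]
        calc Submodule.prod (⊥ : Submodule ℝ (Fin n1 → ℝ)) P2
            ≤ Submodule.map e T ⊔ Submodule.prod P1 ⊥ := by
              rw [h1, ← h4]; exact le_trans h2 h3
          _ ≤ (S ⊔ Submodule.map e T) ⊔ Submodule.prod P1 ⊥ :=
              sup_le_sup_right le_sup_right _
  · -- (b)
    rw [Submodule.map_sup]
    apply sup_le
    · exact le_trans hSb (sup_le_sup_right (Submodule.map_mono hSleR) _)
    · rw [hmapAeT]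
      calc Submodule.map e' (Submodule.map (LinearMap.prodMap A2.mulVecLin A1.mulVecLin) T)
          ≤ Submodule.map e' (Submodule.map (LinearMap.prodMap E2.mulVecLin E1.mulVecLin) T ⊔
            LinearMap.range (LinearMap.prodMap G2.mulVecLin G1.mulVecLin)) :=
            Submodule.map_mono hTb
        _ = Submodule.map (LinearMap.prodMap E1.mulVecLin E2.mulVecLin) (Submodule.map e T) ⊔
            LinearMap.range (LinearMap.prodMap G1.mulVecLin G2.mulVecLin) := by
            rw [Submodule.map_sup, hmapEeT, hrangeG]
        _ ≤ Submodule.map (LinearMap.prodMap E1.mulVecLin E2.mulVecLin)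
            (S ⊔ Submodule.map e T) ⊔
            LinearMap.range (LinearMap.prodMap G1.mulVecLin G2.mulVecLin) :=
            sup_le_sup_right (Submodule.map_mono hTleR) _
  · -- (c)
    exact le_trans hSc (sup_le_sup_right (Submodule.map_mono hSleR) _)
  · -- (d)
    apply sup_le
    · exact hSd
    · rintro ⟨x1, x2⟩ ⟨⟨a, b⟩, ha, h⟩
      cases h
      have := hTd ha
      simp only [LinearMap.mem_ker, LinearMap.coprod_apply, LinearMap.neg_apply] at this ⊢
      have h2 : C2.mulVecLin a = C1.mulVecLin b := by
        have := add_neg_eq_zero.mp this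
        exact this
      rw [h2]
      simp
end

section
/- Let R* be the limit of Algorithm 3.4 (so R* = R^{k} = R^{k+1} for some k). If R* is nonempty it is the maximal subspace of X₁ × X₂ satisfying (i) R* + 𝒢₁^× = R* + 𝒢₂^×, (ii) A^×·R* ⊆ E^×·R* + Im Ḡ^×, (iii) R* ⊆ ker C^×; i.e., every subspace R satisfying (i)–(iii) is contained in R*. -/
/-- the limit `R* = R^k = R^{k+1}` of Algorithm 3.4 is the maximal
subspace satisfying conditions (40i)-(40iii): every subspace `W` satisfying them
is contained in `R*`. -/
theorem stmt_16 (q1 q2 n1 n2 m s1 s2 p : ℕ)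
    (E1 A1 : Matrix (Fin q1) (Fin n1) ℝ) (G1 : Matrix (Fin q1) (Fin s1) ℝ)
    (C1 : Matrix (Fin p) (Fin n1) ℝ)
    (E2 A2 : Matrix (Fin q2) (Fin n2) ℝ) (G2 : Matrix (Fin q2) (Fin s2) ℝ)
    (C2 : Matrix (Fin p) (Fin n2) ℝ)
    (V1 : Submodule ℝ (Fin n1 → ℝ)) (V2 : Submodule ℝ (Fin n2 → ℝ))
    (G1x G2x : Submodule ℝ ((Fin n1 → ℝ) × (Fin n2 → ℝ)))
    (hG1x : G1x = Submodule.prod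
      (Submodule.comap E1.mulVecLin (LinearMap.range G1.mulVecLin) ⊓ V1) ⊥)
    (hG2x : G2x = Submodule.prod ⊥
      (Submodule.comap E2.mulVecLin (LinearMap.range G2.mulVecLin) ⊓ V2))
    (kerCx : Submodule ℝ ((Fin n1 → ℝ) × (Fin n2 → ℝ)))
    (hkerCx : kerCx = LinearMap.ker (LinearMap.coprod C1.mulVecLin (-C2.mulVecLin)))
    -- the sequence Rʲ of Algorithm 3.4
    (R : ℕ → Submodule ℝ ((Fin n1 → ℝ) × (Fin n2 → ℝ)))
    (h0 : R 0 = ⊤)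
    (hsub : ∀ j : ℕ, R (j + 1) ≤ R j)
    (hC : R 1 ≤ kerCx)
    (hA : ∀ j : ℕ, 1 ≤ j → ∀ z ∈ R (j + 1),
      LinearMap.prodMap A1.mulVecLin A2.mulVecLin z ∈
        Submodule.map (LinearMap.prodMap E1.mulVecLin E2.mulVecLin) (R j) ⊔
          LinearMap.range (LinearMap.prodMap G1.mulVecLin G2.mulVecLin))
    (hG : ∀ j : ℕ, R (j + 1) ⊔ G1x = R (j + 1) ⊔ G2x)
    (hmax : ∀ j : ℕ, ∀ W : Submodule ℝ ((Fin n1 → ℝ) × (Fin n2 → ℝ)),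
      W ≤ R j → (j = 0 → W ≤ kerCx) →
      (1 ≤ j → ∀ z ∈ W,
        LinearMap.prodMap A1.mulVecLin A2.mulVecLin z ∈
          Submodule.map (LinearMap.prodMap E1.mulVecLin E2.mulVecLin) (R j) ⊔
            LinearMap.range (LinearMap.prodMap G1.mulVecLin G2.mulVecLin)) →
      (W ⊔ G1x = W ⊔ G2x) → W ≤ R (j + 1))
    -- the algorithm has stabilized at step k
    (k : ℕ) (hk : R (k + 1) = R k) :
    ∀ W : Submodule ℝ ((Fin n1 → ℝ) × (Fin n2 → ℝ)),
      (W ⊔ G1x = W ⊔ G2x) →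
      (Submodule.map (LinearMap.prodMap A1.mulVecLin A2.mulVecLin) W ≤
        Submodule.map (LinearMap.prodMap E1.mulVecLin E2.mulVecLin) W ⊔
          LinearMap.range (LinearMap.prodMap G1.mulVecLin G2.mulVecLin)) →
      W ≤ kerCx → W ≤ R k := by
  intro W hWG hWA hWC
  have key : ∀ j, W ≤ R j := by
    intro j
    induction j with
    | zero => simp [h0]
    | succ j ih =>
      refine hmax j W ih (fun _ => hWC) ?_ hWG
      intro _ z hz
      have : LinearMap.prodMap A1.mulVecLin A2.mulVecLin z ∈
          Submodule.map (LinearMap.prodMap E1.mulVecLin E2.mulVecLin) W ⊔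
            LinearMap.range (LinearMap.prodMap G1.mulVecLin G2.mulVecLin) :=
        hWA (Submodule.mem_map_of_mem hz)
      exact Submodule.mem_sup.mpr (by
        obtain ⟨a, ha, b, hb, hab⟩ := Submodule.mem_sup.mp this
        exact ⟨a, Submodule.map_mono ih ha, b, hb, hab⟩)
  exact key k
end

section
/- There exist regular DAE systems Σ₁, Σ₂ with equal transfer matrices but no bisimulation relation between them. Concretely: Σ₁ with E₁ = [[1,0],[0,0]], A₁ = I₂, B₁ = [0;1], C₁ = [1,1] and Σ₂ with E₂ = [[0,0],[0,1]], A₂ = I₂, B₂ = [1;0], C₂ = [1,1] satisfy C₁(sE₁−A₁)⁻¹B₁ = C₂(sE₂−A₂)⁻¹B₂ = −1 as rational functions, yet the consistent subsets of both systems are empty; i.e., there is no subspace V ⊆ ℝ² with A₁·V ⊆ E₁·V and Im B₁ ⊆ E₁·V (and similarly for Σ₂). -/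
set_option synthInstance.maxHeartbeats 1000000

section stmt17aux

open Matrix

private lemma stmt17_hX : (RatFunc.X : RatFunc ℝ) - 1 ≠ 0 := by
  rw [sub_ne_zero]
  intro h
  have h2 : algebraMap (Polynomial ℝ) (RatFunc ℝ) Polynomial.X
      = algebraMap (Polynomial ℝ) (RatFunc ℝ) 1 := by
    simpa [RatFunc.algebraMap_X] using h
  have := RatFunc.algebraMap_injective ℝ h2
  simpa [Polynomial.coeff_one] using congrArg (Polynomial.coeff · 1) this

private lemma stmt17_hM1 : ((RatFunc.X : RatFunc ℝ) •
      (!![1, 0; 0, 0] : Matrix (Fin 2) (Fin 2) ℝ).map (algebraMap ℝ (RatFunc ℝ)) -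
      (1 : Matrix (Fin 2) (Fin 2) ℝ).map (algebraMap ℝ (RatFunc ℝ)))
    = !![(RatFunc.X : RatFunc ℝ) - 1, 0; 0, -1] := by
  ext i j
  fin_cases i <;> fin_cases j <;>
    simp [Matrix.map_apply, Matrix.one_apply]

private lemma stmt17_hM2 : ((RatFunc.X : RatFunc ℝ) •
      (!![0, 0; 0, 1] : Matrix (Fin 2) (Fin 2) ℝ).map (algebraMap ℝ (RatFunc ℝ)) -
      (1 : Matrix (Fin 2) (Fin 2) ℝ).map (algebraMap ℝ (RatFunc ℝ)))
    = !![-1, 0; 0, (RatFunc.X : RatFunc ℝ) - 1] := by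
  ext i j
  fin_cases i <;> fin_cases j <;>
    simp [Matrix.map_apply, Matrix.one_apply]

private lemma stmt17_hinv1 :
    (!![(RatFunc.X : RatFunc ℝ) - 1, 0; 0, -1])⁻¹
      = !![((RatFunc.X : RatFunc ℝ) - 1)⁻¹, 0; 0, -1] := by
  apply Matrix.inv_eq_right_inv
  ext i j
  fin_cases i <;> fin_cases j <;>
    simp [Matrix.mul_apply, Fin.sum_univ_two, Matrix.one_apply,
      mul_inv_cancel₀ stmt17_hX]

private lemma stmt17_hinv2 :
    (!![-1, 0; 0, (RatFunc.X : RatFunc ℝ) - 1])⁻¹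
      = !![-1, 0; 0, ((RatFunc.X : RatFunc ℝ) - 1)⁻¹] := by
  apply Matrix.inv_eq_right_inv
  ext i j
  fin_cases i <;> fin_cases j <;>
    simp [Matrix.mul_apply, Fin.sum_univ_two, Matrix.one_apply,
      mul_inv_cancel₀ stmt17_hX]

end stmt17aux

/-- Example 4.6: the two concrete regular DAE systems are regular
and have equal transfer matrices, yet their consistent subsets are empty
(no subspace satisfies the consistency conditions), so no bisimulation relation
exists. -/
theorem stmt_17 :
    -- Σ₁ is regular
    ((Polynomial.X : Polynomial ℝ) •
        (!![1, 0; 0, 0] : Matrix (Fin 2) (Fin 2) ℝ).map Polynomial.C -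
        (1 : Matrix (Fin 2) (Fin 2) ℝ).map Polynomial.C).det ≠ 0 ∧
    -- Σ₂ is regular
    ((Polynomial.X : Polynomial ℝ) •
        (!![0, 0; 0, 1] : Matrix (Fin 2) (Fin 2) ℝ).map Polynomial.C -
        (1 : Matrix (Fin 2) (Fin 2) ℝ).map Polynomial.C).det ≠ 0 ∧
    -- the transfer matrices are equal (both equal to -1)
    ((!![1, 1] : Matrix (Fin 1) (Fin 2) ℝ).map (algebraMap ℝ (RatFunc ℝ)) *
        ((RatFunc.X : RatFunc ℝ) •
            (!![1, 0; 0, 0] : Matrix (Fin 2) (Fin 2) ℝ).map (algebraMap ℝ (RatFunc ℝ)) -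
          (1 : Matrix (Fin 2) (Fin 2) ℝ).map (algebraMap ℝ (RatFunc ℝ)))⁻¹ *
        (!![0; 1] : Matrix (Fin 2) (Fin 1) ℝ).map (algebraMap ℝ (RatFunc ℝ)) =
      (!![1, 1] : Matrix (Fin 1) (Fin 2) ℝ).map (algebraMap ℝ (RatFunc ℝ)) *
        ((RatFunc.X : RatFunc ℝ) •
            (!![0, 0; 0, 1] : Matrix (Fin 2) (Fin 2) ℝ).map (algebraMap ℝ (RatFunc ℝ)) -
          (1 : Matrix (Fin 2) (Fin 2) ℝ).map (algebraMap ℝ (RatFunc ℝ)))⁻¹ *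
        (!![1; 0] : Matrix (Fin 2) (Fin 1) ℝ).map (algebraMap ℝ (RatFunc ℝ)) ∧
      (!![1, 1] : Matrix (Fin 1) (Fin 2) ℝ).map (algebraMap ℝ (RatFunc ℝ)) *
        ((RatFunc.X : RatFunc ℝ) •
            (!![1, 0; 0, 0] : Matrix (Fin 2) (Fin 2) ℝ).map (algebraMap ℝ (RatFunc ℝ)) -
          (1 : Matrix (Fin 2) (Fin 2) ℝ).map (algebraMap ℝ (RatFunc ℝ)))⁻¹ *
        (!![0; 1] : Matrix (Fin 2) (Fin 1) ℝ).map (algebraMap ℝ (RatFunc ℝ)) =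
      !![-1]) ∧
    -- the consistent subset of Σ₁ is empty
    (¬ ∃ V : Submodule ℝ (Fin 2 → ℝ),
      Submodule.map (1 : Matrix (Fin 2) (Fin 2) ℝ).mulVecLin V ≤
        Submodule.map (!![1, 0; 0, 0] : Matrix (Fin 2) (Fin 2) ℝ).mulVecLin V ∧
      LinearMap.range (!![0; 1] : Matrix (Fin 2) (Fin 1) ℝ).mulVecLin ≤
        Submodule.map (!![1, 0; 0, 0] : Matrix (Fin 2) (Fin 2) ℝ).mulVecLin V) ∧
    -- the consistent subset of Σ₂ is empty
    (¬ ∃ V : Submodule ℝ (Fin 2 → ℝ),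
      Submodule.map (1 : Matrix (Fin 2) (Fin 2) ℝ).mulVecLin V ≤
        Submodule.map (!![0, 0; 0, 1] : Matrix (Fin 2) (Fin 2) ℝ).mulVecLin V ∧
      LinearMap.range (!![1; 0] : Matrix (Fin 2) (Fin 1) ℝ).mulVecLin ≤
        Submodule.map (!![0, 0; 0, 1] : Matrix (Fin 2) (Fin 2) ℝ).mulVecLin V) := by
  refine ⟨?_, ?_, ⟨?_, ?_⟩, ?_, ?_⟩
  · intro h
    rw [Matrix.det_fin_two] at h
    simp [Matrix.map_apply, Matrix.one_apply] at h
    have := congrArg (Polynomial.eval 0) h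
    simp at this
  · intro h
    rw [Matrix.det_fin_two] at h
    simp [Matrix.map_apply, Matrix.one_apply] at h
    have := congrArg (Polynomial.eval 0) h
    simp at this
  · rw [stmt17_hM1, stmt17_hinv1, stmt17_hM2, stmt17_hinv2]
    ext i j
    fin_cases i <;> fin_cases j <;>
      simp [Matrix.mul_apply, Fin.sum_univ_two, Matrix.map_apply]
  · rw [stmt17_hM1, stmt17_hinv1]
    ext i j
    fin_cases i <;> fin_cases j <;>
      simp [Matrix.mul_apply, Fin.sum_univ_two, Matrix.map_apply]
  · rintro ⟨V, -, hB⟩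
    obtain ⟨v, -, heq⟩ := hB (LinearMap.mem_range_self _ ![1])
    have := congrFun heq 1
    simp [Matrix.mulVecLin_apply, Matrix.mulVec, dotProduct,
      Fin.sum_univ_two] at this
  · rintro ⟨V, -, hB⟩
    obtain ⟨v, -, heq⟩ := hB (LinearMap.mem_range_self _ ![1])
    have := congrFun heq 0
    simp [Matrix.mulVecLin_apply, Matrix.mulVec, dotProduct,
      Fin.sum_univ_two] at this
end
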